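/- arXiv:2004.09325 — 8 statements merged into one kernel-verified Lean document; each statement's English description precedes it below -/
import Mathlib

section
/- Let X be a complete CAT(0) metric space. For every R > 0 and every ε > 0, there exists δ > 0 such that for every nonempty bounded closed subset B of X of circumradius at most R and every point c in X, if B is contained in the closed ball of radius r(B) + δ centered at c (where r(B) is the circumradius of B), then the distance from c to the circumcenter of B is at most ε. -/
open Metric

/-- CAT(0) for a metric space, via existence of midpoints satisfying the
CN (Bruhat–Tits) comparison inequality. -/
def IsCAT0 (X : Type*) [MetricSpace X] : Prop :=
  ∀ y z : X, ∃ m : X, dist y m = dist y z / 2 ∧ dist z m = dist y z / 2 ∧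
    ∀ x : X, dist x m ^ 2 ≤ dist x y ^ 2 / 2 + dist x z ^ 2 / 2 - dist y z ^ 2 / 4

/-- The circumradius of a subset: the smallest `r ≥ 0` such that the set is
contained in some closed ball of radius `r`. -/
noncomputable def circumradius {X : Type*} [MetricSpace X] (B : Set X) : ℝ :=
  sInf {r : ℝ | 0 ≤ r ∧ ∃ x : X, B ⊆ closedBall x r}

/-- The circumcenter of a subset: a point `x` such that the set is contained in the
closed ball of radius `circumradius B` around `x` (such a point exists and is unique
for nonempty bounded closed subsets of a complete CAT(0) space). -/
noncomputable def circumcenter {X : Type*} [MetricSpace X] [Nonempty X] (B : Set X) : X :=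
  Classical.epsilon fun x : X => B ⊆ closedBall x (circumradius B)

section Aux

variable {X : Type*} [MetricSpace X]

lemma radSet_nonempty [Nonempty X] {B : Set X} (hBd : Bornology.IsBounded B) :
    {r : ℝ | 0 ≤ r ∧ ∃ x : X, B ⊆ closedBall x r}.Nonempty := by
  obtain ⟨x⟩ := ‹Nonempty X›
  obtain ⟨r, hr⟩ := hBd.subset_closedBall x
  exact ⟨max r 0, le_max_right _ _, x, hr.trans (closedBall_subset_closedBall (le_max_left _ _))⟩

lemma circumradius_nonneg [Nonempty X] {B : Set X} (hBd : Bornology.IsBounded B) :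
    0 ≤ circumradius B :=
  le_csInf (radSet_nonempty hBd) fun _ hr => hr.1

lemma circumradius_le {B : Set X} {s : ℝ} (hs : 0 ≤ s) {x : X} (h : B ⊆ closedBall x s) :
    circumradius B ≤ s :=
  csInf_le ⟨0, fun _ hr => hr.1⟩ ⟨hs, x, h⟩

lemma exists_approx [Nonempty X] {B : Set X} (hBd : Bornology.IsBounded B) {δ : ℝ}
    (hδ : 0 < δ) : ∃ x : X, B ⊆ closedBall x (circumradius B + δ) := by
  have h : circumradius B < circumradius B + δ := by linarith
  obtain ⟨s, hs, hslt⟩ := exists_lt_of_csInf_lt (radSet_nonempty hBd) h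
  obtain ⟨hs0, x, hx⟩ := hs
  exact ⟨x, hx.trans (closedBall_subset_closedBall hslt.le)⟩

/-- The key CN-inequality estimate on two enclosing balls. -/
lemma key [Nonempty X] (hX : IsCAT0 X) {B : Set X} (hne : B.Nonempty)
    {c1 c2 : X} {r1 r2 : ℝ} (h1 : B ⊆ closedBall c1 r1) (h2 : B ⊆ closedBall c2 r2) :
    dist c1 c2 ^ 2 ≤ 2 * r1 ^ 2 + 2 * r2 ^ 2 - 4 * circumradius B ^ 2 := by
  obtain ⟨m, _, _, hm⟩ := hX c1 c2
  set A : ℝ := r1 ^ 2 / 2 + r2 ^ 2 / 2 - dist c1 c2 ^ 2 / 4 with hA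
  have hball : ∀ x ∈ B, dist x m ^ 2 ≤ A := by
    intro x hx
    have hd1 : dist x c1 ≤ r1 := h1 hx
    have hd2 : dist x c2 ≤ r2 := h2 hx
    have h1sq : dist x c1 ^ 2 ≤ r1 ^ 2 := pow_le_pow_left₀ dist_nonneg hd1 2
    have h2sq : dist x c2 ^ 2 ≤ r2 ^ 2 := pow_le_pow_left₀ dist_nonneg hd2 2
    have := hm x
    rw [hA]
    linarith
  obtain ⟨x0, hx0⟩ := hne
  have hA0 : 0 ≤ A := le_trans (sq_nonneg _) (hball x0 hx0)
  have hsub : B ⊆ closedBall m (Real.sqrt A) := by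
    intro x hx
    rw [mem_closedBall]
    calc dist x m = Real.sqrt (dist x m ^ 2) := (Real.sqrt_sq dist_nonneg).symm
      _ ≤ Real.sqrt A := Real.sqrt_le_sqrt (hball x hx)
  have hr : circumradius B ≤ Real.sqrt A := circumradius_le (Real.sqrt_nonneg A) hsub
  have hr2 : circumradius B ^ 2 ≤ A := by
    have := pow_le_pow_left₀ (circumradius_nonneg ((isBounded_closedBall).subset h1)) hr 2
    rwa [Real.sq_sqrt hA0] at this
  rw [hA] at hr2
  linarith

lemma exists_center [Nonempty X] [CompleteSpace X] (hX : IsCAT0 X) {B : Set X}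
    (hne : B.Nonempty) (hBd : Bornology.IsBounded B) :
    ∃ x : X, B ⊆ closedBall x (circumradius B) := by
  set r := circumradius B with hrdef
  have hr0 : 0 ≤ r := circumradius_nonneg hBd
  have happ : ∀ n : ℕ, ∃ x : X, B ⊆ closedBall x (r + 1 / (n + 1)) := fun n =>
    exists_approx hBd (by positivity)
  choose x hx using happ
  have hmono : ∀ {n N : ℕ}, N ≤ n → (1 : ℝ) / (n + 1) ≤ 1 / (N + 1) := by
    intro n N hNn
    have h : (N : ℝ) + 1 ≤ (n : ℝ) + 1 := by exact_mod_cast Nat.succ_le_succ hNn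
    exact one_div_le_one_div_of_le (by positivity) h
  set b : ℕ → ℝ := fun N => Real.sqrt (4 * (r + 1 / (N + 1)) ^ 2 - 4 * r ^ 2) with hbdef
  have hdistb : ∀ n m N : ℕ, N ≤ n → N ≤ m → dist (x n) (x m) ≤ b N := by
    intro n m N hn hm
    have hk := key hX hne (hx n) (hx m)
    have h1 : (r + 1 / (n + 1)) ^ 2 ≤ (r + 1 / (N + 1)) ^ 2 :=
      pow_le_pow_left₀ (by positivity) (by linarith [hmono hn]) 2
    have h2 : (r + 1 / (m + 1)) ^ 2 ≤ (r + 1 / (N + 1)) ^ 2 :=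
      pow_le_pow_left₀ (by positivity) (by linarith [hmono hm]) 2
    have hsq : dist (x n) (x m) ^ 2 ≤ 4 * (r + 1 / (N + 1)) ^ 2 - 4 * r ^ 2 := by
      rw [← hrdef] at hk; linarith
    calc dist (x n) (x m) = Real.sqrt (dist (x n) (x m) ^ 2) := (Real.sqrt_sq dist_nonneg).symm
      _ ≤ b N := Real.sqrt_le_sqrt hsq
  have hb0 : Filter.Tendsto b Filter.atTop (nhds 0) := by
    have h1 : Filter.Tendsto (fun N : ℕ => (1 : ℝ) / (N + 1)) Filter.atTop (nhds 0) :=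
      tendsto_one_div_add_atTop_nhds_zero_nat
    have h2 : Filter.Tendsto (fun N : ℕ => 4 * (r + 1 / (N + 1)) ^ 2 - 4 * r ^ 2)
        Filter.atTop (nhds 0) := by
      have hc : Filter.Tendsto (fun _ : ℕ => 4 * r ^ 2) Filter.atTop (nhds (4 * r ^ 2)) :=
        tendsto_const_nhds
      have := (((h1.const_add r).pow 2).const_mul 4).sub hc
      simpa using this
    have := h2.sqrt
    simpa [hbdef] using this
  have hcauchy : CauchySeq x := cauchySeq_of_le_tendsto_0 b hdistb hb0
  obtain ⟨p, hp⟩ := cauchySeq_tendsto_of_complete hcauchy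
  refine ⟨p, fun y hy => ?_⟩
  rw [mem_closedBall]
  have hf : Filter.Tendsto (fun n => dist y (x n)) Filter.atTop (nhds (dist y p)) :=
    (tendsto_const_nhds.dist hp)
  have hg : Filter.Tendsto (fun n : ℕ => r + 1 / (n + 1)) Filter.atTop (nhds r) := by
    have := (tendsto_one_div_add_atTop_nhds_zero_nat).const_add r
    simpa using this
  exact le_of_tendsto_of_tendsto' hf hg fun n => hx n hy

end Aux

/-- Lemma 2.1: approximate circumcenters are close to the circumcenter. -/
theorem stmt0 {X : Type*} [MetricSpace X] [CompleteSpace X] [Nonempty X]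
    (hX : IsCAT0 X) :
    ∀ R > (0 : ℝ), ∀ ε > (0 : ℝ), ∃ δ > (0 : ℝ),
      ∀ B : Set X, B.Nonempty → IsClosed B → Bornology.IsBounded B →
        circumradius B ≤ R →
        ∀ c : X, B ⊆ closedBall c (circumradius B + δ) →
          dist c (circumcenter B) ≤ ε := by
  intro R hR ε hε
  refine ⟨min 1 (ε ^ 2 / (4 * R + 2)), lt_min one_pos (by positivity), ?_⟩
  intro B hne hcl hBd hRle c hc
  set δ := min 1 (ε ^ 2 / (4 * R + 2)) with hδdef
  have hδ1 : δ ≤ 1 := min_le_left _ _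
  have hδ2 : δ ≤ ε ^ 2 / (4 * R + 2) := min_le_right _ _
  have hδ0 : 0 < δ := lt_min one_pos (by positivity)
  have hr0 : 0 ≤ circumradius B := circumradius_nonneg hBd
  have hcc : B ⊆ closedBall (circumcenter B) (circumradius B) :=
    Classical.epsilon_spec (exists_center hX hne hBd)
  have hk := key hX hne hc hcc
  have hd2 : dist c (circumcenter B) ^ 2 ≤ ε ^ 2 := by
    have h1 : 2 * (circumradius B + δ) ^ 2 + 2 * circumradius B ^ 2 -
        4 * circumradius B ^ 2 = 4 * circumradius B * δ + 2 * δ ^ 2 := by ring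
    have h2 : 4 * circumradius B * δ + 2 * δ ^ 2 ≤ (4 * R + 2) * δ := by nlinarith
    have h3 : (4 * R + 2) * δ ≤ ε ^ 2 := by
      calc (4 * R + 2) * δ ≤ (4 * R + 2) * (ε ^ 2 / (4 * R + 2)) :=
            mul_le_mul_of_nonneg_left hδ2 (by positivity)
        _ = ε ^ 2 := by field_simp
    linarith
  nlinarith [@dist_nonneg X _ c (circumcenter B), hε.le]
end

section
/- Let X be a CAT(-1) space, let x₀ ∈ X, let K ⊆ X be a compact set, and let B be the set of boundary points ξ ∈ ∂_∞X such that the geodesic ray from x₀ to ξ intersects K. Then B is closed in ∂_∞X (with the cone topology). -/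
open Metric Set

/-- `γ` is a unit-speed geodesic on the interval `[a,b]`. -/
def IsGeodesicOn {X : Type*} [MetricSpace X] (γ : ℝ → X) (a b : ℝ) : Prop :=
  ∀ s ∈ Set.Icc a b, ∀ t ∈ Set.Icc a b, dist (γ s) (γ t) = |s - t|

/-- `X` is a CAT(-1) space: it is geodesic, and every geodesic triangle is thinner than
its comparison triangle in the hyperbolic plane (modelled by `UpperHalfPlane` with its
hyperbolic metric), in the sense of comparison of two sides issued from a common
vertex. -/
def IsCATMinusOne (X : Type*) [MetricSpace X] : Prop :=
  (∀ x y : X, ∃ γ : ℝ → X, γ 0 = x ∧ γ (dist x y) = y ∧ IsGeodesicOn γ 0 (dist x y)) ∧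
  (∀ (p q r : X) (γ₁ γ₂ : ℝ → X),
      γ₁ 0 = p → γ₁ (dist p q) = q → IsGeodesicOn γ₁ 0 (dist p q) →
      γ₂ 0 = p → γ₂ (dist p r) = r → IsGeodesicOn γ₂ 0 (dist p r) →
    ∀ (p' q' r' : UpperHalfPlane) (γ₁' γ₂' : ℝ → UpperHalfPlane),
      dist p' q' = dist p q → dist p' r' = dist p r → dist q' r' = dist q r →
      γ₁' 0 = p' → γ₁' (dist p q) = q' → IsGeodesicOn γ₁' 0 (dist p q) →
      γ₂' 0 = p' → γ₂' (dist p r) = r' → IsGeodesicOn γ₂' 0 (dist p r) →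
      ∀ s ∈ Set.Icc 0 (dist p q), ∀ t ∈ Set.Icc 0 (dist p r),
        dist (γ₁ s) (γ₂ t) ≤ dist (γ₁' s) (γ₂' t))

/-- The visual boundary of `X` based at `x₀`, realized as the space of (unit-speed)
geodesic rays issued from `x₀`, equipped with the cone topology (uniform convergence on
compacta, i.e. the compact-open topology on continuous maps). -/
def RayBoundary (X : Type*) [MetricSpace X] (x₀ : X) : Type _ :=
  {r : C(ℝ, X) // r 0 = x₀ ∧ ∀ s t : ℝ, 0 ≤ s → 0 ≤ t → dist (r s) (r t) = |s - t|}

instance (X : Type*) [MetricSpace X] (x₀ : X) : TopologicalSpace (RayBoundary X x₀) :=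
  inferInstanceAs (TopologicalSpace
    {r : C(ℝ, X) // r 0 = x₀ ∧ ∀ s t : ℝ, 0 ≤ s → 0 ≤ t → dist (r s) (r t) = |s - t|})

/-- Lemma 3.10: in a CAT(-1) space, the set of boundary points whose geodesic ray from
`x₀` meets a given compact set `K` is closed in the visual boundary. -/
theorem stmt2 {X : Type*} [MetricSpace X] (hX : IsCATMinusOne X) (x₀ : X)
    (K : Set X) (hK : IsCompact K) :
    IsClosed {r : RayBoundary X x₀ | ∃ t : ℝ, 0 ≤ t ∧ r.1 t ∈ K} := by
  -- K is bounded, so any intersection time is bounded by some M.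
  obtain ⟨M, hM⟩ : ∃ M : ℝ, ∀ y ∈ K, dist x₀ y ≤ M := by
    rcases hK.isBounded.subset_closedBall x₀ with ⟨M, hM⟩
    exact ⟨M, fun y hy => by simpa [dist_comm] using hM hy⟩
  have key : {r : RayBoundary X x₀ | ∃ t : ℝ, 0 ≤ t ∧ r.1 t ∈ K}
      = (fun r : RayBoundary X x₀ => r.1) ⁻¹'
        {f : C(ℝ, X) | ¬ Set.MapsTo f (Set.Icc (0:ℝ) M) Kᶜ} := by
    ext r
    constructor
    · rintro ⟨t, ht0, htK⟩
      intro hmaps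
      have hdist : dist (r.1 0) (r.1 t) = |0 - t| := r.2.2 0 t le_rfl ht0
      have ht : t ≤ M := by
        have := hM _ htK
        rw [r.2.1] at hdist
        rw [hdist] at this
        rwa [zero_sub, abs_neg, abs_of_nonneg ht0] at this
      exact hmaps ⟨ht0, ht⟩ htK
    · intro h
      simp only [Set.mem_preimage, Set.mem_setOf_eq, Set.mapsTo_iff_image_subset] at h
      obtain ⟨y, ⟨t, ht, rfl⟩, hy⟩ := not_subset.mp h
      exact ⟨t, ht.1, not_not.mp hy⟩
  rw [key]
  refine IsClosed.preimage continuous_subtype_val ?_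
  have : IsOpen {f : C(ℝ, X) | Set.MapsTo f (Set.Icc (0:ℝ) M) Kᶜ} :=
    ContinuousMap.isOpen_setOf_mapsTo isCompact_Icc hK.isClosed.isOpen_compl
  simpa [Set.compl_setOf] using this.isClosed_compl
end

section
/- Let D be a countable set and ε ∈ (0,1). For each n let A_n ⊆ D be finite, let α_n, α'_n : A_n → ℝ₊ be functions with sums Υ_n and Υ'_n, and let ν_n, ν'_n be the associated normalized probability measures on D. Suppose there exist K > 0 and M > 0 such that: (1) α_n(σ) ≤ M and α'_n(σ) ≤ M for all n and σ ∈ A_n; (2) Υ_n ≥ K|A_n|, Υ'_n ≥ K|A_n|, and |A_n| → ∞; (3) there exists m such that for every n, all but at most m elements σ ∈ A_n satisfy |α_n(σ) − α'_n(σ)| ≤ min{K/3, K²/(6M)}·ε. Then for all sufficiently large n, the total variation distance ‖ν_n − ν'_n‖₁ is at most ε. -/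
open Filter

/-- Lemma 3.8: comparison of normalized weighted probability measures on a countable set. -/
theorem stmt3 {D : Type*} [Countable D]
    (ε : ℝ) (hε0 : 0 < ε) (hε1 : ε < 1)
    (A : ℕ → Finset D) (α α' : ℕ → D → ℝ)
    (hnonneg : ∀ n, ∀ σ ∈ A n, 0 ≤ α n σ)
    (hnonneg' : ∀ n, ∀ σ ∈ A n, 0 ≤ α' n σ)
    (K M : ℝ) (hK : 0 < K) (hM : 0 < M)
    (hbound : ∀ n, ∀ σ ∈ A n, α n σ ≤ M ∧ α' n σ ≤ M)
    (hlow : ∀ n, K * (A n).card ≤ ∑ σ ∈ A n, α n σ ∧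
      K * (A n).card ≤ ∑ σ ∈ A n, α' n σ)
    (hcard : Tendsto (fun n => ((A n).card : ℝ)) atTop atTop)
    (m : ℕ)
    (hclose : ∀ n, ∃ B : Finset D, B ⊆ A n ∧ B.card ≤ m ∧
      ∀ σ ∈ A n, σ ∉ B →
        |α n σ - α' n σ| ≤ min (K / 3) (K ^ 2 / (6 * M)) * ε) :
    ∀ᶠ n in atTop,
      ∑ σ ∈ A n,
        |α n σ / (∑ τ ∈ A n, α n τ) - α' n σ / (∑ τ ∈ A n, α' n τ)| ≤ ε := by
  set δ : ℝ := min (K / 3) (K ^ 2 / (6 * M)) with hδdef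
  have hδK : δ ≤ K / 3 := min_le_left _ _
  have hδ0 : 0 ≤ δ := le_min (by positivity) (by positivity)
  filter_upwards [hcard.eventually_ge_atTop (max 1 (6 * m * M / (K * ε)))] with n hn
  classical
  obtain ⟨B, hBA, hBm, hB⟩ := hclose n
  set S : ℝ := ∑ τ ∈ A n, α n τ with hSdef
  set S' : ℝ := ∑ τ ∈ A n, α' n τ with hS'def
  have hc1 : (1 : ℝ) ≤ (A n).card := le_trans (le_max_left _ _) hn
  have hc2 : 6 * m * M / (K * ε) ≤ (A n).card := le_trans (le_max_right _ _) hn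
  have hc2' : 6 * m * M ≤ K * ε * (A n).card := by
    rw [div_le_iff₀ (by positivity)] at hc2
    linarith
  have hS0 : 0 < S := lt_of_lt_of_le (by nlinarith) (hlow n).1
  have hS'0 : 0 < S' := lt_of_lt_of_le (by nlinarith) (hlow n).2
  set T : ℝ := ∑ σ ∈ A n, |α n σ - α' n σ| with hTdef
  have hT : T ≤ m * M + (A n).card * (δ * ε) := by
    rw [hTdef, ← Finset.sum_sdiff hBA]
    have h1 : ∑ σ ∈ A n \ B, |α n σ - α' n σ| ≤ (A n).card * (δ * ε) := by
      calc ∑ σ ∈ A n \ B, |α n σ - α' n σ|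
          ≤ ∑ _σ ∈ A n \ B, δ * ε := by
            refine Finset.sum_le_sum fun σ hσ => ?_
            exact hB σ (Finset.mem_sdiff.mp hσ).1 (Finset.mem_sdiff.mp hσ).2
        _ = (A n \ B).card * (δ * ε) := by rw [Finset.sum_const, nsmul_eq_mul]
        _ ≤ (A n).card * (δ * ε) := by
            have : ((A n \ B).card : ℝ) ≤ (A n).card := by
              exact_mod_cast Finset.card_le_card (Finset.sdiff_subset)
            exact mul_le_mul_of_nonneg_right this (mul_nonneg hδ0 hε0.le)
    have h2 : ∑ σ ∈ B, |α n σ - α' n σ| ≤ m * M := by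
      calc ∑ σ ∈ B, |α n σ - α' n σ| ≤ ∑ _σ ∈ B, M := by
            refine Finset.sum_le_sum fun σ hσ => ?_
            have hσA := hBA hσ
            have h1 := hbound n σ hσA
            have h2 := hnonneg n σ hσA
            have h3 := hnonneg' n σ hσA
            rw [abs_sub_le_iff]
            constructor <;> linarith [h1.1, h1.2]
        _ = B.card * M := by rw [Finset.sum_const, nsmul_eq_mul]
        _ ≤ m * M := by
            have : (B.card : ℝ) ≤ m := by exact_mod_cast hBm
            nlinarith
    linarith
  have hT0 : 0 ≤ T := Finset.sum_nonneg fun σ _ => abs_nonneg _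
  have hSS' : |S - S'| ≤ T := by
    rw [hSdef, hS'def, ← Finset.sum_sub_distrib]
    exact Finset.abs_sum_le_sum_abs _ _
  have key : ∀ σ ∈ A n,
      |α n σ / S - α' n σ / S'| ≤ |α n σ - α' n σ| / S + α' n σ * (|S - S'| / (S * S')) := by
    intro σ hσ
    have h1 : α n σ / S - α' n σ / S' =
        (α n σ - α' n σ) / S + α' n σ * ((S' - S) / (S * S')) := by
      field_simp
      ring
    rw [h1]
    refine (abs_add_le _ _).trans ?_
    rw [abs_div, abs_of_pos hS0, abs_mul, abs_div, abs_of_pos (by positivity : (0:ℝ) < S * S'),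
      abs_of_nonneg (hnonneg' n σ hσ), abs_sub_comm S' S]
  have hsum : ∑ σ ∈ A n, |α n σ / S - α' n σ / S'| ≤ T / S + |S - S'| / S := by
    calc ∑ σ ∈ A n, |α n σ / S - α' n σ / S'|
        ≤ ∑ σ ∈ A n, (|α n σ - α' n σ| / S + α' n σ * (|S - S'| / (S * S'))) :=
          Finset.sum_le_sum key
      _ = T / S + S' * (|S - S'| / (S * S')) := by
          rw [Finset.sum_add_distrib, ← Finset.sum_div, ← Finset.sum_mul, ← hTdef, ← hS'def]
      _ = T / S + |S - S'| / S := by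
          have h : S' * (|S - S'| / (S * S')) = |S - S'| / S := by
            field_simp
          rw [h]
  have hfinal : T / S + |S - S'| / S ≤ ε := by
    have h2 : |S - S'| / S ≤ T / S := by gcongr
    have h2T : T / S + |S - S'| / S ≤ 2 * T / S := by
      rw [two_mul, add_div]
      linarith
    refine h2T.trans ?_
    rw [div_le_iff₀ hS0]
    have hSK : K * (A n).card ≤ S := (hlow n).1
    nlinarith [mul_le_mul_of_nonneg_right hδK
        (by positivity : (0:ℝ) ≤ ((A n).card : ℝ) * ε),
      mul_le_mul_of_nonneg_left hSK hε0.le]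
  exact hsum.trans hfinal
end

section
/- Let G be a countable group acting by Borel automorphisms on a Borel space Δ such that the action is Borel amenable. Then for every k ≥ 1, the induced G-action on the set of nonempty subsets of Δ of cardinality at most k is Borel amenable. -/
open Filter

/-- Probability measures on a countable group `G`, viewed as ℓ¹ densities. -/
def ProbDensity (G : Type*) : Type _ :=
  {μ : G → ℝ // (∀ g, 0 ≤ μ g) ∧ HasSum μ 1}

instance (G : Type*) : MeasurableSpace (ProbDensity G) :=
  inferInstanceAs (MeasurableSpace {μ : G → ℝ // (∀ g, 0 ≤ μ g) ∧ HasSum μ 1})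

/-- Borel amenability of an action of a countable group `G` on a Borel space `X`:
there is a sequence of Borel maps `X → Prob(G)` which is asymptotically equivariant
in ℓ¹-norm.  Here `(g·μ)(h) = μ(g⁻¹h)`. -/
def IsBorelAmenableAction (G : Type*) [Group G] [Countable G]
    (X : Type*) [MeasurableSpace X] (act : G → X → X) : Prop :=
  ∃ ν : ℕ → X → ProbDensity G,
    (∀ n, Measurable (ν n)) ∧
    ∀ (g : G) (x : X),
      Tendsto (fun n => ∑' h : G, |(ν n (act g x)).1 h - (ν n x).1 (g⁻¹ * h)|)
        atTop (nhds 0)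

/-- The set of nonempty subsets of `Δ` of cardinality at most `k`. -/
def SetCardLE (k : ℕ) (Δ : Type*) : Type _ :=
  {S : Set Δ // S.Nonempty ∧ S.Finite ∧ S.ncard ≤ k}

/-- The natural Borel structure on `P_{≤k}(Δ)`: the quotient Borel structure induced by
the map `Δ^k → P_{≤k}(Δ)` sending a tuple to its range. -/
instance (k : ℕ) (Δ : Type*) [MeasurableSpace Δ] : MeasurableSpace (SetCardLE k Δ) :=
  MeasurableSpace.comap (fun S => S.1)
    (MeasurableSpace.map (fun f : Fin k → Δ => Set.range f) MeasurableSpace.pi)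

noncomputable section Stmt5Helper

open Finset in
private lemma abs_sup'_sub_sup'_le' {k : ℕ} (hne : (Finset.univ : Finset (Fin k)).Nonempty)
    (p q : Fin k → ℝ) :
    Finset.univ.sup' hne p - Finset.univ.sup' hne q ≤ ∑ i, |p i - q i| := by
  rw [sub_le_iff_le_add]
  apply Finset.sup'_le
  intro i _
  have h1 : q i ≤ Finset.univ.sup' hne q := Finset.le_sup' q (Finset.mem_univ i)
  have h2 : |p i - q i| ≤ ∑ j, |p j - q j| :=
    Finset.single_le_sum (f := fun j => |p j - q j|) (fun j _ => abs_nonneg _) (Finset.mem_univ i)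
  have h3 : p i - q i ≤ |p i - q i| := le_abs_self _
  linarith

private lemma abs_sup'_sub_sup'_le {k : ℕ} (hne : (Finset.univ : Finset (Fin k)).Nonempty)
    (p q : Fin k → ℝ) :
    |Finset.univ.sup' hne p - Finset.univ.sup' hne q| ≤ ∑ i, |p i - q i| := by
  rw [abs_sub_le_iff]
  refine ⟨abs_sup'_sub_sup'_le' hne p q, ?_⟩
  have := abs_sup'_sub_sup'_le' hne q p
  simpa [abs_sub_comm] using this

section KeyEst

variable {G : Type*} [Countable G]

private lemma sup'_nonneg {k : ℕ} (hne : (Finset.univ : Finset (Fin k)).Nonempty)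
    (a : Fin k → G → ℝ) (ha0 : ∀ i h, 0 ≤ a i h) (h : G) :
    0 ≤ Finset.univ.sup' hne (fun i => a i h) := by
  obtain ⟨i0, hi0⟩ := id hne
  exact le_trans (ha0 i0 h) (Finset.le_sup' (fun i => a i h) hi0)

private lemma sup'_le_sum {k : ℕ} (hne : (Finset.univ : Finset (Fin k)).Nonempty)
    (a : Fin k → G → ℝ) (ha0 : ∀ i h, 0 ≤ a i h) (h : G) :
    Finset.univ.sup' hne (fun i => a i h) ≤ ∑ i, a i h := by
  apply Finset.sup'_le
  intro i _
  exact Finset.single_le_sum (fun j _ => ha0 j h) (Finset.mem_univ i)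

private lemma summable_sup' {k : ℕ} (hne : (Finset.univ : Finset (Fin k)).Nonempty)
    (a : Fin k → G → ℝ) (ha0 : ∀ i h, 0 ≤ a i h) (haS : ∀ i, Summable (a i)) :
    Summable (fun h => Finset.univ.sup' hne (fun i => a i h)) :=
  Summable.of_nonneg_of_le (sup'_nonneg hne a ha0) (sup'_le_sum hne a ha0)
    (summable_sum fun i _ => haS i)

private lemma one_le_tsum_sup' {k : ℕ} (hne : (Finset.univ : Finset (Fin k)).Nonempty)
    (a : Fin k → G → ℝ) (ha0 : ∀ i h, 0 ≤ a i h) (haS : ∀ i, HasSum (a i) 1) :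
    1 ≤ ∑' h, Finset.univ.sup' hne (fun i => a i h) := by
  obtain ⟨i0, hi0⟩ := id hne
  have := Summable.tsum_le_tsum (f := a i0) (fun h => Finset.le_sup' (fun i => a i h) hi0)
    (haS i0).summable (summable_sup' hne a ha0 fun i => (haS i).summable)
  rwa [(haS i0).tsum_eq] at this

private lemma key_est {k : ℕ} (hne : (Finset.univ : Finset (Fin k)).Nonempty)
    (a b : Fin k → G → ℝ)
    (ha0 : ∀ i h, 0 ≤ a i h) (hb0 : ∀ i h, 0 ≤ b i h)
    (haS : ∀ i, HasSum (a i) 1) (hbS : ∀ i, HasSum (b i) 1) :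
    ∑' h, |(∑' h', Finset.univ.sup' hne (fun i => a i h'))⁻¹
              * Finset.univ.sup' hne (fun i => a i h)
          - (∑' h', Finset.univ.sup' hne (fun i => b i h'))⁻¹
              * Finset.univ.sup' hne (fun i => b i h)|
      ≤ 2 * ∑ i, ∑' h, |a i h - b i h| := by
  set A : G → ℝ := fun h => Finset.univ.sup' hne (fun i => a i h) with hA
  set B : G → ℝ := fun h => Finset.univ.sup' hne (fun i => b i h) with hB
  set M : ℝ := ∑' h, A h with hM
  set m : ℝ := ∑' h, B h with hm
  set ε : ℝ := ∑ i, ∑' h, |a i h - b i h| with hε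
  have hA0 : ∀ h, 0 ≤ A h := sup'_nonneg hne a ha0
  have hB0 : ∀ h, 0 ≤ B h := sup'_nonneg hne b hb0
  have hAsum : Summable A := summable_sup' hne a ha0 fun i => (haS i).summable
  have hBsum : Summable B := summable_sup' hne b hb0 fun i => (hbS i).summable
  have hM1 : 1 ≤ M := one_le_tsum_sup' hne a ha0 haS
  have hm1 : 1 ≤ m := one_le_tsum_sup' hne b hb0 hbS
  have hMpos : 0 < M := lt_of_lt_of_le one_pos hM1
  have hmpos : 0 < m := lt_of_lt_of_le one_pos hm1
  have habsum : ∀ i, Summable fun h => |a i h - b i h| := by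
    intro i
    refine Summable.of_nonneg_of_le (fun h => abs_nonneg _) (fun h => ?_)
      (((haS i).summable).add ((hbS i).summable))
    have := abs_sub (a i h) (b i h)
    calc |a i h - b i h| ≤ |a i h| + |b i h| := abs_sub _ _
      _ = a i h + b i h := by rw [abs_of_nonneg (ha0 i h), abs_of_nonneg (hb0 i h)]
  have hABsum : Summable fun h => |A h - B h| := by
    refine Summable.of_nonneg_of_le (fun h => abs_nonneg _) (fun h => ?_) (hAsum.add hBsum)
    calc |A h - B h| ≤ |A h| + |B h| := abs_sub _ _
      _ = A h + B h := by rw [abs_of_nonneg (hA0 h), abs_of_nonneg (hB0 h)]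
  have hAB : ∑' h, |A h - B h| ≤ ε := by
    have h1 : ∑' h, |A h - B h| ≤ ∑' h, ∑ i, |a i h - b i h| := by
      refine Summable.tsum_le_tsum (fun h => abs_sup'_sub_sup'_le hne _ _) hABsum ?_
      exact summable_sum fun i _ => habsum i
    rw [Summable.tsum_finsetSum (fun i _ => habsum i)] at h1
    exact h1
  have hε0 : 0 ≤ ε := Finset.sum_nonneg fun i _ => tsum_nonneg fun h => abs_nonneg _
  have hMm : |m - M| ≤ ε := by
    have h1 : m - M = ∑' h, (B h - A h) := (Summable.tsum_sub hBsum hAsum).symm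
    have h2 : |∑' h, (B h - A h)| ≤ ∑' h, |B h - A h| := by
      have := norm_tsum_le_tsum_norm (f := fun h => B h - A h)
        (by simpa [Real.norm_eq_abs, abs_sub_comm] using hABsum)
      simpa [Real.norm_eq_abs] using this
    rw [h1]
    refine le_trans h2 (le_trans ?_ hAB)
    simp [abs_sub_comm]
  -- pointwise bound
  have hpt : ∀ h, |M⁻¹ * A h - m⁻¹ * B h| ≤ M⁻¹ * |A h - B h| + |M⁻¹ - m⁻¹| * B h := by
    intro h
    have heq : M⁻¹ * A h - m⁻¹ * B h = M⁻¹ * (A h - B h) + (M⁻¹ - m⁻¹) * B h := by ring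
    rw [heq]
    calc |M⁻¹ * (A h - B h) + (M⁻¹ - m⁻¹) * B h|
        ≤ |M⁻¹ * (A h - B h)| + |(M⁻¹ - m⁻¹) * B h| := abs_add_le _ _
      _ = M⁻¹ * |A h - B h| + |M⁻¹ - m⁻¹| * B h := by
          rw [abs_mul, abs_mul, abs_of_nonneg (by positivity : (0:ℝ) ≤ M⁻¹),
            abs_of_nonneg (hB0 h)]
  have hs1 : Summable fun h => M⁻¹ * |A h - B h| := hABsum.mul_left _
  have hs2 : Summable fun h => |M⁻¹ - m⁻¹| * B h := hBsum.mul_left _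
  have hLHSsum : Summable fun h => |M⁻¹ * A h - m⁻¹ * B h| :=
    Summable.of_nonneg_of_le (fun h => abs_nonneg _) hpt (hs1.add hs2)
  calc ∑' h, |M⁻¹ * A h - m⁻¹ * B h|
      ≤ ∑' h, (M⁻¹ * |A h - B h| + |M⁻¹ - m⁻¹| * B h) :=
        Summable.tsum_le_tsum hpt hLHSsum (hs1.add hs2)
    _ = M⁻¹ * ∑' h, |A h - B h| + |M⁻¹ - m⁻¹| * m := by
        rw [Summable.tsum_add hs1 hs2, tsum_mul_left, tsum_mul_left]
    _ ≤ 2 * ε := by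
        have e1 : M⁻¹ * ∑' h, |A h - B h| ≤ ε := by
          have : M⁻¹ ≤ 1 := by
            rw [inv_le_one_iff₀]; right; exact hM1
          calc M⁻¹ * ∑' h, |A h - B h| ≤ 1 * ∑' h, |A h - B h| := by
                apply mul_le_mul_of_nonneg_right this (tsum_nonneg fun h => abs_nonneg _)
            _ = ∑' h, |A h - B h| := one_mul _
            _ ≤ ε := hAB
        have e2 : |M⁻¹ - m⁻¹| * m ≤ ε := by
          have heq : M⁻¹ - m⁻¹ = (m - M) * (M⁻¹ * m⁻¹) := by
            field_simp
          rw [heq, abs_mul, abs_of_nonneg (by positivity : (0:ℝ) ≤ M⁻¹ * m⁻¹)]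
          have : |m - M| * (M⁻¹ * m⁻¹) * m = |m - M| * M⁻¹ := by
            field_simp
          rw [this]
          have hMinv1 : M⁻¹ ≤ 1 := by rw [inv_le_one_iff₀]; right; exact hM1
          calc |m - M| * M⁻¹ ≤ |m - M| * 1 :=
                mul_le_mul_of_nonneg_left hMinv1 (abs_nonneg _)
            _ = |m - M| := mul_one _
            _ ≤ ε := hMm
        linarith

end KeyEst

section Main

variable {G Δ : Type*} [Group G] [Countable G]

/-- pointwise sup of the densities over a set of points -/
private def dfun (ν : Δ → ProbDensity G) (S : Set Δ) (h : G) : ℝ :=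
  sSup ((fun x => (ν x).1 h) '' S)

private def mfun (ν : Δ → ProbDensity G) (S : Set Δ) : ℝ := ∑' h, dfun ν S h

private def tval (ν : Δ → ProbDensity G) (S : Set Δ) : G → ℝ :=
  fun h => (mfun ν S)⁻¹ * dfun ν S h

private lemma dfun_range {k : ℕ} (hne : (Finset.univ : Finset (Fin k)).Nonempty)
    (ν : Δ → ProbDensity G) (u : Fin k → Δ) (h : G) :
    dfun ν (Set.range u) h = Finset.univ.sup' hne (fun i => (ν (u i)).1 h) := by
  rw [dfun, Finset.sup'_eq_csSup_image]
  congr 1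
  rw [Finset.coe_univ, Set.image_univ]
  rw [← Set.range_comp]
  rfl

private lemma mfun_range {k : ℕ} (hne : (Finset.univ : Finset (Fin k)).Nonempty)
    (ν : Δ → ProbDensity G) (u : Fin k → Δ) :
    mfun ν (Set.range u) = ∑' h, Finset.univ.sup' hne (fun i => (ν (u i)).1 h) := by
  rw [mfun]
  exact tsum_congr fun h => dfun_range hne ν u h

private lemma exists_range_eq {k : ℕ} (hk : 1 ≤ k) (S : Set Δ)
    (h1 : S.Nonempty) (h2 : S.Finite) (h3 : S.ncard ≤ k) :
    ∃ u : Fin k → Δ, Set.range u = S := by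
  classical
  set F : Finset Δ := h2.toFinset with hF
  have hFS : (F : Set Δ) = S := h2.coe_toFinset
  have hcard : F.card ≤ k := by
    rw [← Set.ncard_coe_finset, hFS]; exact h3
  set l : List Δ := F.toList with hl
  have hlen : l.length = F.card := Finset.length_toList F
  have hlne : l ≠ [] := by
    intro hemp
    have : F.card = 0 := by rw [← hlen, hemp]; rfl
    rw [Finset.card_eq_zero] at this
    rw [this] at hFS
    simp at hFS
    exact h1.ne_empty hFS.symm
  set d : Δ := l.head hlne with hd
  refine ⟨fun i => l.getD i d, ?_⟩
  have hmemS : ∀ x, x ∈ l → x ∈ S := by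
    intro x hx
    rw [← hFS]
    exact Finset.mem_toList.mp hx
  ext x
  simp only [Set.mem_range]
  constructor
  · rintro ⟨i, rfl⟩
    by_cases hlt : (i : ℕ) < l.length
    · rw [List.getD_eq_getElem l d hlt]
      exact hmemS _ (List.getElem_mem hlt)
    · rw [List.getD_eq_default l d (le_of_not_gt hlt)]
      exact hmemS _ (List.head_mem hlne)
  · intro hx
    have hxl : x ∈ l := by
      rw [hl, Finset.mem_toList, ← Finset.mem_coe, hFS]
      exact hx
    obtain ⟨j, hj, hjx⟩ := List.mem_iff_getElem.mp hxl
    have hjk : j < k := lt_of_lt_of_le hj (hlen ▸ hcard)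
    refine ⟨⟨j, hjk⟩, ?_⟩
    rw [List.getD_eq_getElem l d (by simpa using hj)]
    exact hjx

private lemma tval_nonneg_hasSum {k : ℕ} (hne : (Finset.univ : Finset (Fin k)).Nonempty)
    (ν : Δ → ProbDensity G) (u : Fin k → Δ) :
    (∀ h, 0 ≤ tval ν (Set.range u) h) ∧ HasSum (tval ν (Set.range u)) 1 := by
  have h0 : ∀ i (h : G), 0 ≤ (ν (u i)).1 h := fun i h => (ν (u i)).2.1 h
  have hS : ∀ i, HasSum (fun h => (ν (u i)).1 h) 1 := fun i => (ν (u i)).2.2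
  have hd0 : ∀ h, 0 ≤ dfun ν (Set.range u) h := by
    intro h; rw [dfun_range hne]; exact sup'_nonneg hne _ h0 h
  have hdsum : Summable (dfun ν (Set.range u)) := by
    have := summable_sup' hne (fun i => (ν (u i)).1) h0 (fun i => (hS i).summable)
    exact this.congr fun h => (dfun_range hne ν u h).symm
  have hm1 : 1 ≤ mfun ν (Set.range u) := by
    rw [mfun_range hne]
    exact one_le_tsum_sup' hne _ h0 hS
  have hmne : mfun ν (Set.range u) ≠ 0 := by positivity
  constructor
  · intro h
    have : 0 ≤ (mfun ν (Set.range u))⁻¹ := by positivity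
    exact mul_nonneg this (hd0 h)
  · have h2 := hdsum.hasSum.mul_left (mfun ν (Set.range u))⁻¹
    rw [show (mfun ν (Set.range u))⁻¹ * ∑' h, dfun ν (Set.range u) h = 1 from
      inv_mul_cancel₀ hmne] at h2
    exact h2

variable [MeasurableSpace Δ]

private lemma measurable_eval (h : G) : Measurable (fun μ : ProbDensity G => μ.1 h) :=
  (measurable_pi_apply h).comp measurable_subtype_coe

private lemma measurable_tval_range {k : ℕ} (hne : (Finset.univ : Finset (Fin k)).Nonempty)
    (ν : Δ → ProbDensity G) (hν : Measurable ν) :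
    Measurable (fun u : Fin k → Δ => tval ν (Set.range u)) := by
  have hdmeas : ∀ h : G, Measurable (fun u : Fin k → Δ => dfun ν (Set.range u) h) := by
    intro h
    have : (fun u : Fin k → Δ => dfun ν (Set.range u) h)
        = fun u => Finset.univ.sup' hne (fun i => (fun v : Fin k → Δ => (ν (v i)).1 h) u) := by
      funext u
      rw [dfun_range hne]
    rw [this]
    have hmeas_i : ∀ i : Fin k, Measurable (fun v : Fin k → Δ => (ν (v i)).1 h) :=
      fun i => (measurable_eval h).comp (hν.comp (measurable_pi_apply i))
    have := Finset.measurable_sup' hne (fun i _ => hmeas_i i)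
    convert this using 1
    funext u
    rw [Finset.sup'_apply]
  have h0 : ∀ (u : Fin k → Δ) (h : G), 0 ≤ dfun ν (Set.range u) h := by
    intro u h; rw [dfun_range hne]
    exact sup'_nonneg hne _ (fun i h => (ν (u i)).2.1 h) h
  have hdsum : ∀ u : Fin k → Δ, Summable (dfun ν (Set.range u)) := by
    intro u
    have := summable_sup' hne (fun i => (ν (u i)).1)
      (fun i h => (ν (u i)).2.1 h) (fun i => (ν (u i)).2.2.summable)
    exact this.congr fun h => (dfun_range hne ν u h).symm
  have hmmeas : Measurable (fun u : Fin k → Δ => mfun ν (Set.range u)) := by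
    have heq : (fun u : Fin k → Δ => mfun ν (Set.range u))
        = fun u => (∑' h, ENNReal.ofReal (dfun ν (Set.range u) h)).toReal := by
      funext u
      rw [mfun, ← ENNReal.ofReal_tsum_of_nonneg (h0 u) (hdsum u),
        ENNReal.toReal_ofReal (tsum_nonneg (h0 u))]
    rw [heq]
    exact (Measurable.ennreal_tsum fun h =>
      ENNReal.measurable_ofReal.comp (hdmeas h)).ennreal_toReal
  apply measurable_pi_lambda
  intro h
  exact (hmmeas.inv).mul (hdmeas h)

end Main

end Stmt5Helper

/-- Lemma 5.14: if a countable group acts Borel amenably on a Borel space `Δ`, then the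
induced action on the space of nonempty subsets of cardinality at most `k` is Borel
amenable. -/
theorem stmt5 {G Δ : Type*} [Group G] [Countable G] [MeasurableSpace Δ]
    [MulAction G Δ] (hmeas : ∀ g : G, Measurable (fun x : Δ => g • x))
    (k : ℕ) (hk : 1 ≤ k)
    (h : IsBorelAmenableAction G Δ (fun g x => g • x)) :
    IsBorelAmenableAction G (SetCardLE k Δ)
      (fun g S => ⟨(fun x => g • x) '' S.1,
        S.2.1.image _, S.2.2.1.image _,
        le_trans (Set.ncard_image_le S.2.2.1) S.2.2.2⟩) := by
  classical
  obtain ⟨ν, hνmeas, hνlim⟩ := h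
  have hne : (Finset.univ : Finset (Fin k)).Nonempty := ⟨⟨0, hk⟩, Finset.mem_univ _⟩
  refine ⟨fun n S => ⟨tval (ν n) S.1, ?_⟩, ?_, ?_⟩
  · -- ProbDensity property
    obtain ⟨u, hu⟩ := exists_range_eq hk S.1 S.2.1 S.2.2.1 S.2.2.2
    rw [← hu]
    exact tval_nonneg_hasSum hne (ν n) u
  · -- measurability
    intro n s hs
    obtain ⟨t, ht, rfl⟩ := MeasurableSpace.measurableSet_comap.mp hs
    refine MeasurableSpace.measurableSet_comap.mpr
      ⟨(fun T : Set Δ => tval (ν n) T) ⁻¹' t, ?_, rfl⟩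
    exact MeasurableSpace.map_def.mpr
      (measurable_tval_range hne (ν n) (hνmeas n) ht)
  · -- asymptotic equivariance
    intro g S
    obtain ⟨u, hu⟩ := exists_range_eq hk S.1 S.2.1 S.2.2.1 S.2.2.2
    have hrange : (fun x => g • x) '' Set.range u = Set.range (fun i => g • u i) :=
      (Set.range_comp _ u).symm
    refine squeeze_zero (fun n => tsum_nonneg fun h => abs_nonneg _)
      (g := fun n => 2 * ∑ i : Fin k,
        ∑' h : G, |(ν n (g • u i)).1 h - (ν n (u i)).1 (g⁻¹ * h)|) ?_ ?_
    · intro n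
      have key := key_est (G := G) hne
        (fun i => (ν n (g • u i)).1) (fun i h => (ν n (u i)).1 (g⁻¹ * h))
        (fun i h => (ν n (g • u i)).2.1 h) (fun i h => (ν n (u i)).2.1 _)
        (fun i => (ν n (g • u i)).2.2)
        (fun i => by
          have h1 := (ν n (u i)).2.2
          have h2 := (Equiv.mulLeft g⁻¹).hasSum_iff (f := (ν n (u i)).1) (a := 1)
          simp only [Equiv.coe_mulLeft] at h2
          exact h2.mpr h1)
      show ∑' h : G, |tval (ν n) ((fun x => g • x) '' S.1) h
          - tval (ν n) S.1 (g⁻¹ * h)| ≤ _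
      simp only [← hu, hrange, tval, dfun_range hne,
        mfun_range hne]
      have hm_eq : (∑' h' : G, Finset.univ.sup' hne fun i => (ν n (u i)).1 h')
          = ∑' h' : G, Finset.univ.sup' hne fun i => (ν n (u i)).1 (g⁻¹ * h') := by
        have h3 := (Equiv.mulLeft g⁻¹).tsum_eq
          (fun h' => Finset.univ.sup' hne fun i => (ν n (u i)).1 h')
        simp only [Equiv.coe_mulLeft] at h3
        exact h3.symm
      rw [hm_eq]
      exact key
    · have h1 := tendsto_finset_sum (Finset.univ : Finset (Fin k))
        (fun i _ => hνlim g (u i))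
      have h2 := h1.const_mul (2 : ℝ)
      simpa using h2
end

section
/- Let G_Γ be a 2-dimensional Artin group with defining graph Γ, acting on its modified Deligne complex D_Γ. If two standard trees T₁ and T₂ in D_Γ share a rank one vertex, then T₁ = T₂. -/
namespace ArtinME

variable {V : Type*}

/-- The alternating word `sts⋯` of length `n` in the free group on `V`. -/
def altWord (s t : V) : ℕ → FreeGroup V
  | 0 => 1
  | n + 1 => FreeGroup.of s * altWord t s n

/-- The Artin relators of the labeled graph `(V, m)`.  The label `m s t = 0` encodes
the absence of an edge (`m_{st} = ∞`); labels `≥ 2` give braid relations. -/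
def artinRels (m : V → V → ℕ) : Set (FreeGroup V) :=
  {r | ∃ s t : V, 2 ≤ m s t ∧ r = altWord s t (m s t) * (altWord t s (m s t))⁻¹}

/-- The Artin group with defining labeled graph `(V, m)`. -/
def ArtinGroup (m : V → V → ℕ) : Type _ := PresentedGroup (artinRels m)

instance (m : V → V → ℕ) : Group (ArtinGroup m) :=
  inferInstanceAs (Group (PresentedGroup (artinRels m)))

/-- The standard generator of `ArtinGroup m` associated to a vertex `s`. -/
def gen (m : V → V → ℕ) (s : V) : ArtinGroup m :=
  PresentedGroup.of (rels := artinRels m) s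

/-- The generator of the center `Z_{st}` of the dihedral-type parabolic `G_{st}`:
`(st)^{m_{st}}` if `m_{st}` is odd, `(st)^{m_{st}/2}` if `m_{st}` is even. -/
def zElt (m : V → V → ℕ) (s t : V) : ArtinGroup m :=
  if m s t % 2 = 1 then (gen m s * gen m t) ^ (m s t)
  else (gen m s * gen m t) ^ (m s t / 2)

/-- The conjugate `gHg⁻¹` of a subgroup. -/
def conjSub {G : Type*} [Group G] (g : G) (H : Subgroup G) : Subgroup G :=
  H.map (MulAut.conj g).toMonoidHom

/-- The edge (dihedral) parabolic subgroup `G_{st}`. -/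
def edgeSub (m : V → V → ℕ) (s t : V) : Subgroup (ArtinGroup m) :=
  Subgroup.closure {gen m s, gen m t}

/-- The cyclic vertex parabolic subgroup `G_s = ⟨s⟩`. -/
def vertSub (m : V → V → ℕ) (s : V) : Subgroup (ArtinGroup m) :=
  Subgroup.zpowers (gen m s)

/-- Edges of the defining graph. -/
def EdgeIdx (m : V → V → ℕ) : Type _ := {p : V × V // 2 ≤ m p.1 p.2}

/-- The vertex set of the modified Deligne complex `D_Γ`: rank 0 vertices are group
elements (cosets of the trivial subgroup), rank 1 vertices are cosets `gG_s`, and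
rank 2 vertices are cosets `gG_{st}` for edges `st`. -/
def DVertex (m : V → V → ℕ) : Type _ :=
  ArtinGroup m ⊕
    ((Σ s : V, ArtinGroup m ⧸ vertSub m s) ⊕
      (Σ e : EdgeIdx m, ArtinGroup m ⧸ edgeSub m e.1.1 e.1.2))

/-- The action of `G_Γ` on the vertices of the modified Deligne complex, by left
translation of cosets. -/
def vact (m : V → V → ℕ) (h : ArtinGroup m) : DVertex m → DVertex m
  | Sum.inl g => Sum.inl (h * g)
  | Sum.inr (Sum.inl ⟨s, x⟩) => Sum.inr (Sum.inl ⟨s, h • x⟩)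
  | Sum.inr (Sum.inr ⟨e, x⟩) => Sum.inr (Sum.inr ⟨e, h • x⟩)

/-- The fixed vertex set `F_h` of an element `h` in the modified Deligne complex. -/
def FixSet (m : V → V → ℕ) (h : ArtinGroup m) : Set (DVertex m) :=
  {v | vact m h v = v}

/-- Rank one vertices of the modified Deligne complex. -/
def IsRankOne (m : V → V → ℕ) (v : DVertex m) : Prop :=
  ∃ (s : V) (x : ArtinGroup m ⧸ vertSub m s), v = Sum.inr (Sum.inl ⟨s, x⟩)

/-- Standard trees: fixed point sets of conjugates of standard generators. -/
def IsStandardTree (m : V → V → ℕ) (T : Set (DVertex m)) : Prop :=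
  ∃ (g : ArtinGroup m) (s : V), T = FixSet m (g * gen m s * g⁻¹)

/-- The labeled graph `(V, m)` defines a 2-dimensional Artin group: every triangle of
`Γ` with labels `m, n, r` satisfies `1/m + 1/n + 1/r ≤ 1`. -/
def TwoDimensional (m : V → V → ℕ) : Prop :=
  ∀ s t u : V, 2 ≤ m s t → 2 ≤ m t u → 2 ≤ m s u →
    (1 : ℚ) / (m s t : ℚ) + (1 : ℚ) / (m t u : ℚ) + (1 : ℚ) / (m s u : ℚ) ≤ 1


/-- The length homomorphism value of an alternating word. -/
lemma lift_altWord (s t : V) (n : ℕ) :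
    (FreeGroup.lift (fun _ : V => Multiplicative.ofAdd (1 : ℤ))) (altWord s t n) =
      Multiplicative.ofAdd (n : ℤ) := by
  induction n generalizing s t with
  | zero => simp [altWord]
  | succ n ih =>
    simp only [altWord, map_mul, FreeGroup.lift_apply_of, ih t s]
    rw [← ofAdd_add]
    push_cast
    ring_nf

/-- The length homomorphism `G_Γ → ℤ` sending each generator to `1`. -/
def lenHom (m : V → V → ℕ) : ArtinGroup m →* Multiplicative ℤ :=
  PresentedGroup.toGroup (f := fun _ : V => Multiplicative.ofAdd (1 : ℤ))
    (by
      rintro r ⟨s, t, _, rfl⟩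
      simp [lift_altWord])

lemma lenHom_gen (m : V → V → ℕ) (s : V) : lenHom m (gen m s) = Multiplicative.ofAdd (1 : ℤ) :=
  PresentedGroup.toGroup.of _

/-- If `h` stabilizes the rank one vertex `x ∈ G/G_s` and has length `1`, then `h`
is exactly the conjugate `g (gen s) g⁻¹` for the representative `g = x.out`. -/
lemma eq_conj_of_fix (m : V → V → ℕ) (s : V) (x : ArtinGroup m ⧸ vertSub m s)
    (h : ArtinGroup m) (hfix : h • x = x) (hlen : lenHom m h = Multiplicative.ofAdd 1) :
    h = x.out * gen m s * x.out⁻¹ := by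
  have hx : h • (QuotientGroup.mk x.out : ArtinGroup m ⧸ vertSub m s) = QuotientGroup.mk x.out := by
    rw [QuotientGroup.out_eq']; exact hfix
  rw [show h • (QuotientGroup.mk x.out : ArtinGroup m ⧸ vertSub m s)
        = QuotientGroup.mk (h * x.out) from rfl, QuotientGroup.eq] at hx
  obtain ⟨k, hk0⟩ := hx
  have hk : gen m s ^ k = (h * x.out)⁻¹ * x.out := hk0
  have hinv : h⁻¹ = x.out * (gen m s) ^ k * x.out⁻¹ := by
    have : (h * x.out)⁻¹ * x.out = x.out⁻¹ * h⁻¹ * x.out := by group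
    rw [this] at hk
    have := hk.symm
    calc h⁻¹ = x.out * (x.out⁻¹ * h⁻¹ * x.out) * x.out⁻¹ := by group
    _ = x.out * (gen m s) ^ k * x.out⁻¹ := by rw [← this]
  have hh : h = x.out * (gen m s) ^ (-k) * x.out⁻¹ := by
    have := congrArg (·⁻¹) hinv
    simpa [mul_assoc, zpow_neg] using this
  have hlk : lenHom m h = Multiplicative.ofAdd (-k) := by
    rw [hh]
    simp only [map_mul, map_zpow, map_inv, lenHom_gen]
    rw [← ofAdd_zsmul]
    have : ∀ a b : Multiplicative ℤ, a * b * a⁻¹ = b := fun a b => mul_inv_cancel_comm a b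
    rw [this]
    simp
  rw [hlk] at hlen
  have : -k = 1 := Multiplicative.ofAdd.injective hlen
  rw [hh, this, zpow_one]

/-- Lemma 7.3: in the modified Deligne complex of a 2-dimensional Artin group, two
standard trees sharing a rank one vertex are equal. -/
theorem stmt7 (m : V → V → ℕ)
    (hsymm : ∀ s t, m s t = m t s) (hloop : ∀ s, m s s = 0)
    (h2d : TwoDimensional m) :
    ∀ T₁ T₂ : Set (DVertex m), IsStandardTree m T₁ → IsStandardTree m T₂ →
      (∃ v : DVertex m, IsRankOne m v ∧ v ∈ T₁ ∧ v ∈ T₂) → T₁ = T₂ := by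
  rintro T₁ T₂ ⟨g₁, s₁, rfl⟩ ⟨g₂, s₂, rfl⟩ ⟨v, ⟨s, x, rfl⟩, hv1, hv2⟩
  have len1 : lenHom m (g₁ * gen m s₁ * g₁⁻¹) = Multiplicative.ofAdd 1 := by
    simp only [map_mul, map_inv, lenHom_gen]
    exact mul_inv_cancel_comm _ _
  have len2 : lenHom m (g₂ * gen m s₂ * g₂⁻¹) = Multiplicative.ofAdd 1 := by
    simp only [map_mul, map_inv, lenHom_gen]
    exact mul_inv_cancel_comm _ _
  have fix1 : (g₁ * gen m s₁ * g₁⁻¹) • x = x := by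
    have h' : (Sum.inr (Sum.inl ⟨s, (g₁ * gen m s₁ * g₁⁻¹) • x⟩) : DVertex m)
        = Sum.inr (Sum.inl ⟨s, x⟩) := hv1
    injection h' with h2
    injection h2 with h3
    simpa using h3
  have fix2 : (g₂ * gen m s₂ * g₂⁻¹) • x = x := by
    have h' : (Sum.inr (Sum.inl ⟨s, (g₂ * gen m s₂ * g₂⁻¹) • x⟩) : DVertex m)
        = Sum.inr (Sum.inl ⟨s, x⟩) := hv2
    injection h' with h2
    injection h2 with h3
    simpa using h3
  have e1 := eq_conj_of_fix m s x _ fix1 len1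
  have e2 := eq_conj_of_fix m s x _ fix2 len2
  rw [e1, e2]


end ArtinME
end

section
/- Let G be a countable group, Θ a simple graph with countable vertex set on which G acts, and suppose for every finite nonempty vertex set S the setwise stabilizer of S in G equals its pointwise stabilizer. Let 𝒢 be a discrete measured groupoid over a base space Y with a cocycle ρ : 𝒢 → G. If there exists a stably (𝒢,ρ)-invariant Borel map Y → P_f(V(Θ))∖{∅} (to nonempty finite vertex sets), then there exists a stably (𝒢,ρ)-invariant Borel map Y → V(Θ). -/
open MeasureTheory

/-- A discrete measured groupoid over the standard measure space `(Y, μ)`. -/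
structure DMGroupoid (Y : Type*) [MeasurableSpace Y] (μ : Measure Y) where
  /-- the space of arrows -/
  E : Type*
  /-- the Borel structure on the arrows -/
  mE : MeasurableSpace E
  src : E → Y
  rng : E → Y
  measurable_src : @Measurable E Y mE _ src
  measurable_rng : @Measurable E Y mE _ rng
  /-- composition `g₁ ∗ g₂`, defined when `s(g₁) = r(g₂)` -/
  comp : (g₁ g₂ : E) → src g₁ = rng g₂ → E
  src_comp : ∀ g₁ g₂ h, src (comp g₁ g₂ h) = src g₂
  rng_comp : ∀ g₁ g₂ h, rng (comp g₁ g₂ h) = rng g₁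
  unit : Y → E
  src_unit : ∀ y, src (unit y) = y
  rng_unit : ∀ y, rng (unit y) = y
  inv : E → E
  src_inv : ∀ g, src (inv g) = rng g
  rng_inv : ∀ g, rng (inv g) = src g
  comp_assoc : ∀ g₁ g₂ g₃ (h₁ : src g₁ = rng g₂) (h₂ : src g₂ = rng g₃),
    comp (comp g₁ g₂ h₁) g₃ ((src_comp g₁ g₂ h₁).trans h₂) =
      comp g₁ (comp g₂ g₃ h₂) (h₁.trans (rng_comp g₂ g₃ h₂).symm)
  comp_unit : ∀ g, comp g (unit (src g)) ((rng_unit (src g)).symm) = g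
  unit_comp : ∀ g, comp (unit (rng g)) g (src_unit (rng g)) = g
  comp_inv : ∀ g, comp g (inv g) ((rng_inv g).symm) = unit (rng g)
  inv_comp : ∀ g, comp (inv g) g (src_inv g) = unit (src g)
  /-- discreteness: countable fibers -/
  discrete : ∀ y : Y, Set.Countable {g : E | src g = y}
  /-- quasi-invariance of the measure -/
  quasiInvariant : ∀ B : Set E, MeasurableSet[mE] B →
    Set.InjOn src B → Set.InjOn rng B → (μ (src '' B) = 0 ↔ μ (rng '' B) = 0)

/-- A (Borel) cocycle `ρ : 𝒢 → G` into a countable group: Borel, and multiplicative on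
composable pairs over a conull subset of the base. -/
def IsCocycle {Y : Type*} [MeasurableSpace Y] {μ : Measure Y}
    (Gr : DMGroupoid Y μ) {G : Type*} [Group G] (ρ : Gr.E → G) : Prop :=
  (∀ g : G, MeasurableSet[Gr.mE] (ρ ⁻¹' {g})) ∧
  ∃ Y₀ : Set Y, MeasurableSet Y₀ ∧ μ Y₀ᶜ = 0 ∧
    ∀ (g₁ g₂ : Gr.E) (h : Gr.src g₁ = Gr.rng g₂),
      Gr.src g₁ ∈ Y₀ → Gr.rng g₁ ∈ Y₀ → Gr.src g₂ ∈ Y₀ →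
      ρ (Gr.comp g₁ g₂ h) = ρ g₁ * ρ g₂

/-- A Borel map `φ : Y → Ω` (with `Ω` a countable `G`-set) is stably `(𝒢,ρ)`-invariant:
there is a countable Borel partition of `Y` such that `φ` is `(𝒢|_{Y_n},ρ)`-invariant
on each piece, over a conull subset. -/
def StablyInv {Y : Type*} [MeasurableSpace Y] {μ : Measure Y}
    (Gr : DMGroupoid Y μ) {G : Type*} (ρ : Gr.E → G)
    {Ω : Type*} (act : G → Ω → Ω) (φ : Y → Ω) : Prop :=
  (∀ ω : Ω, MeasurableSet (φ ⁻¹' {ω})) ∧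
  ∃ (P : ℕ → Set Y) (Y₀ : Set Y),
    (∀ n, MeasurableSet (P n)) ∧ MeasurableSet Y₀ ∧ μ Y₀ᶜ = 0 ∧
    (∀ i j, i ≠ j → Disjoint (P i) (P j)) ∧ (⋃ n, P n) = Set.univ ∧
    ∀ (n : ℕ) (g : Gr.E), Gr.src g ∈ P n ∩ Y₀ → Gr.rng g ∈ P n ∩ Y₀ →
      φ (Gr.rng g) = act (ρ g) (φ (Gr.src g))

/-- Lemma 5.4: if the setwise stabilizer of every nonempty finite vertex set of the
simple graph `Θ` equals its pointwise stabilizer, then any stably `(𝒢,ρ)`-invariant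
Borel map to nonempty finite vertex sets yields a stably `(𝒢,ρ)`-invariant Borel map
to vertices. -/
theorem stmt15 {Y : Type*} [MeasurableSpace Y] (μ : Measure Y)
    {G : Type*} [Group G] [Countable G]
    {Vtx : Type*} [Countable Vtx] [DecidableEq Vtx]
    (Θ : SimpleGraph Vtx) [MulAction G Vtx]
    (hadj : ∀ (g : G) (a b : Vtx), Θ.Adj a b → Θ.Adj (g • a) (g • b))
    (hstab : ∀ S : Finset Vtx, S.Nonempty →
      ∀ g : G, S.image (fun v => g • v) = S → ∀ v ∈ S, g • v = v)
    (Gr : DMGroupoid Y μ) (ρ : Gr.E → G) (hρ : IsCocycle Gr ρ)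
    (φ : Y → Finset Vtx) (hφne : ∀ y, (φ y).Nonempty)
    (hφ : StablyInv Gr ρ (fun g S => S.image (fun v => g • v)) φ) :
    ∃ ψ : Y → Vtx, StablyInv Gr ρ (fun g v => g • v) ψ := by
  rcases isEmpty_or_nonempty Y with hY | hY
  · refine ⟨fun y => (hY.elim y), ?_, fun _ => ∅, Set.univ, ?_, MeasurableSet.univ, ?_, ?_, ?_, ?_⟩
    · intro ω
      rw [Set.eq_empty_of_isEmpty (_ ⁻¹' {ω})]; exact MeasurableSet.empty
    · intro n; exact MeasurableSet.empty
    · simp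
    · intro i j _; simp
    · simp [Set.eq_empty_of_isEmpty (Set.univ : Set Y)]
    · intro n g hg _; exact (hY.elim (Gr.src g))
  · obtain ⟨y0⟩ := hY
    haveI : Nonempty Vtx := ⟨(hφne y0).choose⟩
    classical
    -- choice function
    set c : Finset Vtx → Vtx := fun S => if h : S.Nonempty then h.choose else Classical.arbitrary Vtx with hc
    have hcmem : ∀ S : Finset Vtx, S.Nonempty → c S ∈ S := by
      intro S hS; simp only [hc, dif_pos hS]; exact hS.choose_spec
    set ψ : Y → Vtx := fun y => c (φ y) with hψ
    obtain ⟨hφmeas, P, Y₀, hPmeas, hY₀meas, hY₀null, hPdisj, hPcover, hinv⟩ := hφ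
    obtain ⟨ι, hι⟩ := Countable.exists_injective_nat (ℕ × Finset Vtx)
    set Q : ℕ → Set Y := fun m => ⋃ (p : ℕ × Finset Vtx) (_ : ι p = m), P p.1 ∩ φ ⁻¹' {p.2}
      with hQ
    refine ⟨ψ, ?_, Q, Y₀, ?_, hY₀meas, hY₀null, ?_, ?_, ?_⟩
    · -- measurability of ψ
      intro v
      have : ψ ⁻¹' {v} = ⋃ (S : Finset Vtx) (_ : c S = v), φ ⁻¹' {S} := by
        ext y
        simp only [Set.mem_preimage, Set.mem_singleton_iff, Set.mem_iUnion, hψ]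
        constructor
        · intro h; exact ⟨φ y, h, rfl⟩
        · rintro ⟨S, h, hS⟩; rw [hS]; exact h
      rw [this]
      exact MeasurableSet.iUnion fun S => MeasurableSet.iUnion fun _ => hφmeas S
    · intro m
      exact MeasurableSet.iUnion fun p => MeasurableSet.iUnion fun _ =>
        (hPmeas p.1).inter (hφmeas p.2)
    · -- disjointness
      intro i j hij
      refine Set.disjoint_left.2 ?_
      intro y hyi hyj
      simp only [hQ, Set.mem_iUnion] at hyi hyj
      obtain ⟨p, hpi, hyp⟩ := hyi
      obtain ⟨q, hqj, hyq⟩ := hyj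
      rcases eq_or_ne p q with rfl | hpq
      · exact hij (hpi ▸ hqj)
      · rcases eq_or_ne p.1 q.1 with h1 | h1
        · have h2 : p.2 ≠ q.2 := fun h2 => hpq (Prod.ext h1 h2)
          have := hyp.2; have := hyq.2
          simp only [Set.mem_preimage, Set.mem_singleton_iff] at *
          exact h2 (hyp.2.symm.trans hyq.2)
        · exact Set.disjoint_left.1 (hPdisj p.1 q.1 h1) hyp.1 hyq.1
    · -- cover
      ext y
      simp only [hQ, Set.mem_iUnion, Set.mem_univ, iff_true]
      have : y ∈ ⋃ n, P n := hPcover ▸ Set.mem_univ y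
      obtain ⟨n, hn⟩ := Set.mem_iUnion.1 this
      exact ⟨ι (n, φ y), (n, φ y), rfl, hn, rfl⟩
    · -- invariance
      intro m g hs hr
      obtain ⟨hs1, hs2⟩ := hs
      obtain ⟨hr1, hr2⟩ := hr
      simp only [hQ, Set.mem_iUnion] at hs1 hr1
      obtain ⟨p, hpm, hsp⟩ := hs1
      obtain ⟨q, hqm, hrq⟩ := hr1
      have hpq : p = q := hι (hpm.trans hqm.symm)
      subst hpq
      have hφs : φ (Gr.src g) = p.2 := hsp.2
      have hφr : φ (Gr.rng g) = p.2 := hrq.2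
      have hkey : φ (Gr.rng g) = (φ (Gr.src g)).image (fun v => ρ g • v) :=
        hinv p.1 g ⟨hsp.1, hs2⟩ ⟨hrq.1, hr2⟩
      have hfix : (φ (Gr.src g)).image (fun v => ρ g • v) = φ (Gr.src g) := by
        rw [← hkey, hφs, hφr]
      have hne := hφne (Gr.src g)
      have hmem : ψ (Gr.src g) ∈ φ (Gr.src g) := hcmem _ hne
      have : ρ g • ψ (Gr.src g) = ψ (Gr.src g) :=
        hstab (φ (Gr.src g)) hne (ρ g) hfix _ hmem
      show ψ (Gr.rng g) = ρ g • ψ (Gr.src g)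
      rw [this, hψ]
      simp only [hφs, hφr]
end

section
/- Let G be a countable group acting on a countable set V, and suppose there is a uniform bound N on the length of chains X₁ ⊆ X₂ ⊆ ··· ⊆ X_k of finite subsets of V whose pointwise stabilizers strictly decrease. Let 𝒢 be a discrete measured groupoid over a standard probability space (Y,μ) with cocycle ρ : 𝒢 → G, and suppose there exists at least one stably (𝒢,ρ)-invariant Borel map Y → P_f(V)∖{∅}. Then there exists a stably (𝒢,ρ)-invariant Borel map θ_max : Y → P_f(V)∖{∅} such that for every stably (𝒢,ρ)-invariant Borel map θ : Y → P_f(V)∖{∅} and almost every y ∈ Y, the pointwise stabilizer of θ_max(y) is contained in the pointwise stabilizer of θ(y). -/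
open MeasureTheory

/-- The pointwise stabilizer of a finite subset of a `G`-set. -/
def pstab (G : Type*) [Group G] {V : Type*} [MulAction G V] (S : Finset V) :
    Subgroup G where
  carrier := {g | ∀ v ∈ S, g • v = v}
  one_mem' := fun v _ => one_smul G v
  mul_mem' := by
    intro a b ha hb v hv
    rw [mul_smul, hb v hv, ha v hv]
  inv_mem' := by
    intro a ha v hv
    calc a⁻¹ • v = a⁻¹ • (a • v) := by rw [ha v hv]
    _ = v := inv_smul_smul a v


section Aux

open MeasureTheory

lemma mem_pstab {G : Type*} [Group G] {V : Type*} [MulAction G V] {S : Finset V} {g : G} :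
    g ∈ pstab G S ↔ ∀ v ∈ S, g • v = v := Iff.rfl

lemma pstab_anti {G : Type*} [Group G] {V : Type*} [MulAction G V] {S T : Finset V}
    (h : S ⊆ T) : pstab G T ≤ pstab G S :=
  fun _ hg v hv => hg v (h hv)

/-- A chain of length `k` of finite sets with strictly decreasing pointwise
stabilizers, ending at `X`. -/
def HasChain (G : Type*) [Group G] {V : Type*} [MulAction G V] (X : Finset V) (k : ℕ) : Prop :=
  ∃ C : ℕ → Finset V, C k = X ∧ (∀ i, i < k → C i ⊆ C (i + 1)) ∧
    (∀ i, i < k → pstab G (C (i + 1)) < pstab G (C i))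

/-- The maximal length of a chain ending at `X`. -/
noncomputable def rk (G : Type*) [Group G] {V : Type*} [MulAction G V] (X : Finset V) : ℕ :=
  sSup {k | HasChain G X k}

section RK

variable {G : Type*} [Group G] {V : Type*} [MulAction G V] {N : ℕ}

lemma hasChain_zero (X : Finset V) : HasChain G X 0 :=
  ⟨fun _ => X, rfl, fun i hi => absurd hi (Nat.not_lt_zero i),
    fun i hi => absurd hi (Nat.not_lt_zero i)⟩

variable (hbdd : ∀ (X : Finset V) (k : ℕ), HasChain G X k → k ≤ N)
include hbdd

lemma rk_le (X : Finset V) : rk G X ≤ N :=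
  csSup_le ⟨0, by exact hasChain_zero X⟩ fun k hk => hbdd X k hk

lemma hasChain_rk (X : Finset V) : HasChain G X (rk G X) :=
  Nat.sSup_mem ⟨0, by exact hasChain_zero X⟩ ⟨N, fun k hk => hbdd X k hk⟩

lemma le_rk {X : Finset V} {k : ℕ} (h : HasChain G X k) : k ≤ rk G X :=
  le_csSup ⟨N, fun j hj => hbdd X j hj⟩ h

lemma rk_lt_rk {X X' : Finset V} (hsub : X ⊆ X') (hlt : pstab G X' < pstab G X) :
    rk G X < rk G X' := by
  classical
  obtain ⟨C, hCk, hCsub, hCst⟩ := hasChain_rk hbdd X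
  have hch : HasChain G X' (rk G X + 1) := by
    refine ⟨fun i => if i ≤ rk G X then C i else X', if_neg (by omega), fun i hi => ?_,
      fun i hi => ?_⟩
    · show (if i ≤ rk G X then C i else X') ⊆ (if i + 1 ≤ rk G X then C (i + 1) else X')
      rw [if_pos (by omega : i ≤ rk G X)]
      by_cases h : i + 1 ≤ rk G X
      · rw [if_pos h]; exact hCsub i (by omega)
      · rw [if_neg h]
        have hi' : i = rk G X := by omega
        rw [hi', hCk]; exact hsub
    · show pstab G (if i + 1 ≤ rk G X then C (i + 1) else X') <
        pstab G (if i ≤ rk G X then C i else X')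
      rw [if_pos (by omega : i ≤ rk G X)]
      by_cases h : i + 1 ≤ rk G X
      · rw [if_pos h]; exact hCst i (by omega)
      · rw [if_neg h]
        have hi' : i = rk G X := by omega
        rw [hi', hCk]; exact hlt
  exact Nat.lt_of_succ_le (le_rk hbdd hch)

lemma rk_mono {X X' : Finset V} (hsub : X ⊆ X') : rk G X ≤ rk G X' := by
  classical
  rcases lt_or_eq_of_le (pstab_anti hsub : pstab G X' ≤ pstab G X) with hlt | heq
  · exact (rk_lt_rk hbdd hsub hlt).le
  · obtain ⟨C, hCk, hCsub, hCst⟩ := hasChain_rk hbdd X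
    refine le_rk hbdd ⟨fun i => if i = rk G X then X' else C i, if_pos rfl, fun i hi => ?_,
      fun i hi => ?_⟩
    · show (if i = rk G X then X' else C i) ⊆ (if i + 1 = rk G X then X' else C (i + 1))
      rw [if_neg (Nat.ne_of_lt hi)]
      by_cases h : i + 1 = rk G X
      · rw [if_pos h]
        have h1 := hCsub i hi
        rw [h, hCk] at h1
        exact h1.trans hsub
      · rw [if_neg h]; exact hCsub i hi
    · show pstab G (if i + 1 = rk G X then X' else C (i + 1)) <
        pstab G (if i = rk G X then X' else C i)
      rw [if_neg (Nat.ne_of_lt hi)]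
      by_cases h : i + 1 = rk G X
      · rw [if_pos h]
        have h1 := hCst i hi
        rw [h, hCk] at h1
        exact heq ▸ h1
      · rw [if_neg h]; exact hCst i hi

end RK

/-- Sets defined by a predicate in two countably-valued maps with measurable fibers
are measurable. -/
lemma measSet_pred2 {Y : Type*} [MeasurableSpace Y] {Ω₁ Ω₂ : Type*} [Countable Ω₁] [Countable Ω₂]
    (g₁ : Y → Ω₁) (g₂ : Y → Ω₂) (h₁ : ∀ ω, MeasurableSet (g₁ ⁻¹' {ω}))
    (h₂ : ∀ ω, MeasurableSet (g₂ ⁻¹' {ω})) (p : Ω₁ → Ω₂ → Prop) :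
    MeasurableSet {y | p (g₁ y) (g₂ y)} := by
  have h : {y | p (g₁ y) (g₂ y)} =
      ⋃ (a : Ω₁) (b : Ω₂) (_ : p a b), g₁ ⁻¹' {a} ∩ g₂ ⁻¹' {b} := by
    ext y
    simp only [Set.mem_setOf_eq, Set.mem_iUnion, Set.mem_inter_iff, Set.mem_preimage,
      Set.mem_singleton_iff]
    exact ⟨fun h => ⟨g₁ y, g₂ y, h, rfl, rfl⟩, fun ⟨a, b, hab, ha, hb⟩ => ha ▸ hb ▸ hab⟩
  rw [h]
  exact MeasurableSet.iUnion fun a => MeasurableSet.iUnion fun b =>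
    MeasurableSet.iUnion fun _ => (h₁ a).inter (h₂ b)

/-- Composition of a countably-valued map with measurable fibers with any function is
measurable. -/
lemma meas_comp_countable {Y : Type*} [MeasurableSpace Y] {Ω β : Type*} [Countable Ω]
    [MeasurableSpace β] (g : Y → Ω) (hg : ∀ ω, MeasurableSet (g ⁻¹' {ω})) (h : Ω → β) :
    Measurable (fun y => h (g y)) := by
  intro A _
  have heq : (fun y => h (g y)) ⁻¹' A = ⋃ (ω : Ω) (_ : h ω ∈ A), g ⁻¹' {ω} := by
    ext y
    simp only [Set.mem_preimage, Set.mem_iUnion, Set.mem_singleton_iff]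
    exact ⟨fun hy => ⟨g y, hy, rfl⟩, fun ⟨ω, hω, hgy⟩ => hgy ▸ hω⟩
  rw [heq]
  exact MeasurableSet.iUnion fun ω => MeasurableSet.iUnion fun _ => hg ω

/-- The pointwise union of two stably invariant maps is stably invariant. -/
lemma stablyInv_union {Y : Type*} [MeasurableSpace Y] {μ : Measure Y}
    (Gr : DMGroupoid Y μ) {G : Type*} [Group G] (ρ : Gr.E → G)
    {V : Type*} [Countable V] [DecidableEq V] [MulAction G V]
    {φ ψ : Y → Finset V}
    (hφ : StablyInv Gr ρ (fun g S => S.image (fun v => g • v)) φ)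
    (hψ : StablyInv Gr ρ (fun g S => S.image (fun v => g • v)) ψ) :
    StablyInv Gr ρ (fun g S => S.image (fun v => g • v)) (fun y => φ y ∪ ψ y) := by
  obtain ⟨hφm, P, Y₀, hPm, hY₀m, hY₀, hPd, hPu, hPinv⟩ := hφ
  obtain ⟨hψm, Q, Z₀, hQm, hZ₀m, hZ₀, hQd, hQu, hQinv⟩ := hψ
  set e : ℕ ≃ ℕ × ℕ := (Denumerable.eqv (ℕ × ℕ)).symm with he
  constructor
  · intro S
    have h : (fun y => φ y ∪ ψ y) ⁻¹' {S} =
        ⋃ (A : Finset V) (B : Finset V) (_ : A ∪ B = S), φ ⁻¹' {A} ∩ ψ ⁻¹' {B} := by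
      ext y
      simp only [Set.mem_preimage, Set.mem_singleton_iff, Set.mem_iUnion, Set.mem_inter_iff]
      exact ⟨fun h => ⟨φ y, ψ y, h, rfl, rfl⟩, fun ⟨A, B, hAB, hA, hB⟩ => by rw [hA, hB, hAB]⟩
    rw [h]
    exact MeasurableSet.iUnion fun A => MeasurableSet.iUnion fun B =>
      MeasurableSet.iUnion fun _ => (hφm A).inter (hψm B)
  · refine ⟨fun n => P (e n).1 ∩ Q (e n).2, Y₀ ∩ Z₀,
      fun n => (hPm _).inter (hQm _), hY₀m.inter hZ₀m, ?_, ?_, ?_, ?_⟩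
    · rw [Set.compl_inter]; exact measure_union_null hY₀ hZ₀
    · intro i j hij
      have hne : e i ≠ e j := fun h => hij (e.injective h)
      by_cases hf : (e i).1 = (e j).1
      · have hs : (e i).2 ≠ (e j).2 := fun h => hne (Prod.ext hf h)
        exact ((hQd _ _ hs).mono Set.inter_subset_right Set.inter_subset_right)
      · exact ((hPd _ _ hf).mono Set.inter_subset_left Set.inter_subset_left)
    · ext y
      simp only [Set.mem_iUnion, Set.mem_inter_iff, Set.mem_univ, iff_true]
      have h1 : y ∈ ⋃ n, P n := hPu ▸ Set.mem_univ y
      have h2 : y ∈ ⋃ n, Q n := hQu ▸ Set.mem_univ y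
      obtain ⟨i, hi⟩ := Set.mem_iUnion.mp h1
      obtain ⟨j, hj⟩ := Set.mem_iUnion.mp h2
      refine ⟨e.symm (i, j), ?_, ?_⟩
      · rw [Equiv.apply_symm_apply]; exact hi
      · rw [Equiv.apply_symm_apply]; exact hj
    · rintro n g ⟨⟨hs1, hs2⟩, hs3, hs4⟩ ⟨⟨hr1, hr2⟩, hr3, hr4⟩
      show φ (Gr.rng g) ∪ ψ (Gr.rng g) = (φ (Gr.src g) ∪ ψ (Gr.src g)).image _
      rw [Finset.image_union,
        hPinv _ g ⟨hs1, hs3⟩ ⟨hr1, hr3⟩, hQinv _ g ⟨hs2, hs4⟩ ⟨hr2, hr4⟩]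

end Aux

set_option maxHeartbeats 2000000 in
/-- Lemma 5.5: existence of a stably invariant Borel map to nonempty finite vertex sets
of maximal type — one whose pointwise stabilizer is a.e. contained in that of any other
stably invariant map — under a uniform bound on chains of finite sets with strictly
decreasing pointwise stabilizers. -/
theorem stmt16 {Y : Type*} [MeasurableSpace Y] (μ : Measure Y) [IsProbabilityMeasure μ]
    {G : Type*} [Group G] [Countable G]
    {V : Type*} [Countable V] [DecidableEq V] [MulAction G V]
    (N : ℕ)
    (hchain : ∀ (k : ℕ) (X : ℕ → Finset V),
      (∀ i, i < k → X i ⊆ X (i + 1)) →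
      (∀ i, i < k → pstab G (X (i + 1)) < pstab G (X i)) → k ≤ N)
    (Gr : DMGroupoid Y μ) (ρ : Gr.E → G) (hρ : IsCocycle Gr ρ)
    (hex : ∃ φ : Y → Finset V, (∀ y, (φ y).Nonempty) ∧
      StablyInv Gr ρ (fun g S => S.image (fun v => g • v)) φ) :
    ∃ θmax : Y → Finset V, (∀ y, (θmax y).Nonempty) ∧
      StablyInv Gr ρ (fun g S => S.image (fun v => g • v)) θmax ∧
      ∀ θ : Y → Finset V, (∀ y, (θ y).Nonempty) →
        StablyInv Gr ρ (fun g S => S.image (fun v => g • v)) θ →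
        ∀ᵐ y ∂μ, pstab G (θmax y) ≤ pstab G (θ y) := by
  classical
  obtain ⟨φ, hφne, hφinv⟩ := hex
  have hbdd : ∀ (X : Finset V) (k : ℕ), HasChain G X k → k ≤ N := by
    rintro X k ⟨C, _, h1, h2⟩
    exact hchain k C h1 h2
  set Good : (Y → Finset V) → Prop := fun θ =>
    (∀ y, (θ y).Nonempty) ∧ StablyInv Gr ρ (fun g S => S.image (fun v => g • v)) θ
    with hGoodDef
  have hGoodφ : Good φ := ⟨hφne, hφinv⟩
  haveI : Nonempty {θ : Y → Finset V // Good θ} := ⟨⟨φ, hGoodφ⟩⟩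
  set a : (Y → Finset V) → ENNReal := fun θ => ∫⁻ y, (rk G (θ y) : ENNReal) ∂μ with haDef
  have ha_le : ∀ θ : Y → Finset V, a θ ≤ N := by
    intro θ
    calc a θ ≤ ∫⁻ _, (N : ENNReal) ∂μ :=
          lintegral_mono fun y => by exact Nat.cast_le.mpr (rk_le hbdd (θ y))
    _ = N := by simp [lintegral_const]
  set M : ENNReal := ⨆ θ : {θ : Y → Finset V // Good θ}, a θ.1 with hMDef
  have hM_ne_top : M ≠ ⊤ :=
    (lt_of_le_of_lt (iSup_le fun θ : {θ : Y → Finset V // Good θ} => ha_le θ.1) (ENNReal.natCast_lt_top N)).ne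
  have haM : ∀ θ, Good θ → a θ ≤ M := fun θ hθ =>
    le_iSup (fun θ : {θ : Y → Finset V // Good θ} => a θ.1) ⟨θ, hθ⟩
  have hψex : ∀ n : ℕ, ∃ θ : Y → Finset V, Good θ ∧ M ≤ a θ + ((n : ENNReal) + 1)⁻¹ := by
    intro n
    by_contra h
    push_neg at h
    have hφlt := h φ hGoodφ
    have hM0 : M ≠ 0 := by
      intro h0
      rw [h0] at hφlt
      simp at hφlt
    have hle : M ≤ M - ((n : ENNReal) + 1)⁻¹ :=
      iSup_le fun θ => ENNReal.le_sub_of_add_le_right (by simp) (h θ.1 θ.2).le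
    exact absurd hle (not_le.mpr (ENNReal.sub_lt_self hM_ne_top hM0 (by simp)))
  choose ψ hψGood hψM using hψex
  have hKex : ∀ y : Y, ∃ k, ∀ j, rk G (ψ j y) ≤ rk G (ψ k y) := by
    intro y
    have hbd : BddAbove {m | ∃ j, rk G (ψ j y) = m} :=
      ⟨N, by rintro m ⟨j, rfl⟩; exact rk_le hbdd _⟩
    obtain ⟨k, hk⟩ := Nat.sSup_mem (⟨rk G (ψ 0 y), 0, rfl⟩ :
      Set.Nonempty {m | ∃ j, rk G (ψ j y) = m}) hbd
    exact ⟨k, fun j => hk ▸ le_csSup hbd ⟨j, rfl⟩⟩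
  set K : Y → ℕ := fun y => Nat.find (hKex y) with hKDef
  have hKspec : ∀ (y : Y) (j : ℕ), rk G (ψ j y) ≤ rk G (ψ (K y) y) :=
    fun y => Nat.find_spec (hKex y)
  set θmax : Y → Finset V := fun y => ψ (K y) y with hθmaxDef
  have hsing : ∀ n S, MeasurableSet (ψ n ⁻¹' {S}) := fun n => (hψGood n).2.1
  have hmaxm : ∀ k : ℕ, MeasurableSet {y | ∀ j, rk G (ψ j y) ≤ rk G (ψ k y)} := by
    intro k
    have h2 : {y | ∀ j, rk G (ψ j y) ≤ rk G (ψ k y)} =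
        ⋂ j, {y | rk G (ψ j y) ≤ rk G (ψ k y)} := by ext y; simp
    rw [h2]
    exact MeasurableSet.iInter fun j =>
      measSet_pred2 (ψ j) (ψ k) (hsing j) (hsing k) (fun A B => rk G A ≤ rk G B)
  have hKiff : ∀ (y : Y) (k : ℕ), K y = k ↔ (∀ j, rk G (ψ j y) ≤ rk G (ψ k y)) ∧
      ∀ j, j < k → ¬ ∀ i, rk G (ψ i y) ≤ rk G (ψ j y) := fun y k => Nat.find_eq_iff (hKex y)
  have hKmeas : ∀ k, MeasurableSet {y | K y = k} := by
    intro k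
    have h : {y | K y = k} = {y | ∀ j, rk G (ψ j y) ≤ rk G (ψ k y)} ∩
        ⋂ (j : ℕ) (_ : j < k), {y | ∀ i, rk G (ψ i y) ≤ rk G (ψ j y)}ᶜ := by
      ext y
      simp only [Set.mem_setOf_eq, Set.mem_inter_iff, Set.mem_iInter, Set.mem_compl_iff]
      exact hKiff y k
    rw [h]
    exact (hmaxm k).inter
      (MeasurableSet.iInter fun j => MeasurableSet.iInter fun _ => (hmaxm j).compl)
  have hθmaxSing : ∀ S, MeasurableSet (θmax ⁻¹' {S}) := by
    intro S
    have h : θmax ⁻¹' {S} = ⋃ k, ({y | K y = k} ∩ ψ k ⁻¹' {S}) := by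
      ext y
      simp only [Set.mem_preimage, Set.mem_singleton_iff, Set.mem_iUnion, Set.mem_inter_iff,
        Set.mem_setOf_eq]
      constructor
      · intro hy; exact ⟨K y, rfl, hy⟩
      · rintro ⟨k, hk, hy⟩
        show ψ (K y) y = S
        rw [hk]; exact hy
    rw [h]
    exact MeasurableSet.iUnion fun k => (hKmeas k).inter (hsing k S)
  have hθmaxNe : ∀ y, (θmax y).Nonempty := fun y => (hψGood (K y)).1 y
  have hθmaxInv : StablyInv Gr ρ (fun g S => S.image (fun v => g • v)) θmax := by
    have h2 := fun n => (hψGood n).2.2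
    choose Pf Zf hPm hZm hZnull hPdisj hPuniv hPinv using h2
    set e : ℕ ≃ ℕ × ℕ := (Denumerable.eqv (ℕ × ℕ)).symm with he
    refine ⟨hθmaxSing, fun n => {y | K y = (e n).1} ∩ Pf (e n).1 (e n).2, ⋂ m, Zf m,
      fun n => (hKmeas _).inter (hPm _ _), MeasurableSet.iInter fun m => hZm m, ?_, ?_, ?_, ?_⟩
    · rw [Set.compl_iInter]; exact measure_iUnion_null hZnull
    · intro i j hij
      rw [Set.disjoint_left]
      rintro y ⟨hk1, hp1⟩ ⟨hk2, hp2⟩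
      have hf : (e i).1 = (e j).1 := by rw [← hk1, ← hk2]
      have hs : (e i).2 ≠ (e j).2 := fun h => hij (e.injective (Prod.ext hf h))
      rw [hf] at hp1
      exact Set.disjoint_left.mp (hPdisj (e j).1 _ _ hs) hp1 hp2
    · ext y
      simp only [Set.mem_iUnion, Set.mem_inter_iff, Set.mem_univ, iff_true, Set.mem_setOf_eq]
      have h1 : y ∈ ⋃ i, Pf (K y) i := (hPuniv (K y)) ▸ Set.mem_univ y
      obtain ⟨i, hi⟩ := Set.mem_iUnion.mp h1
      refine ⟨e.symm (K y, i), ?_, ?_⟩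
      · rw [Equiv.apply_symm_apply]
      · rw [Equiv.apply_symm_apply]; exact hi
    · rintro n g ⟨⟨hs1, hs2⟩, hs3⟩ ⟨⟨hr1, hr2⟩, hr3⟩
      have hsy : θmax (Gr.src g) = ψ (e n).1 (Gr.src g) := by
        show ψ (K (Gr.src g)) (Gr.src g) = _
        rw [hs1]
      have hry : θmax (Gr.rng g) = ψ (e n).1 (Gr.rng g) := by
        show ψ (K (Gr.rng g)) (Gr.rng g) = _
        rw [hr1]
      rw [hsy, hry]
      exact hPinv (e n).1 (e n).2 g ⟨hs2, Set.mem_iInter.mp hs3 _⟩ ⟨hr2, Set.mem_iInter.mp hr3 _⟩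
  have hθtop : a θmax ≠ ⊤ := (lt_of_le_of_lt (ha_le θmax) (ENNReal.natCast_lt_top N)).ne
  have hMθ : M ≤ a θmax := by
    have hψle : ∀ n, a (ψ n) ≤ a θmax :=
      fun n => lintegral_mono fun y => by exact Nat.cast_le.mpr (hKspec y n)
    by_contra h
    push_neg at h
    obtain ⟨n, hn⟩ := ENNReal.exists_inv_nat_lt (tsub_pos_of_lt h).ne'
    have h1 : M ≤ a θmax + ((n : ENNReal) + 1)⁻¹ :=
      (hψM n).trans (add_le_add_left (hψle n) _)
    have h2 : ((n : ENNReal) + 1)⁻¹ ≤ ((n : ENNReal))⁻¹ := ENNReal.inv_le_inv.mpr le_self_add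
    have h4 : a θmax + ((n : ENNReal))⁻¹ < a θmax + (M - a θmax) :=
      ENNReal.add_lt_add_left hθtop hn
    rw [add_tsub_cancel_of_le h.le] at h4
    exact absurd ((h1.trans (add_le_add_right h2 _)).trans_lt h4) (lt_irrefl M)
  refine ⟨θmax, hθmaxNe, hθmaxInv, ?_⟩
  intro θ hθne hθinv
  have huGood : Good (fun y => θmax y ∪ θ y) := by
    constructor
    · intro y
      obtain ⟨v, hv⟩ := hθmaxNe y
      exact ⟨v, Finset.mem_union_left _ hv⟩
    · exact stablyInv_union Gr ρ hθmaxInv hθinv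
  set A : Set Y := {y | ¬ pstab G (θmax y) ≤ pstab G (θ y)} with hADef
  have hAmeas : MeasurableSet A :=
    measSet_pred2 θmax θ hθmaxSing hθinv.1 (fun S T => ¬ pstab G S ≤ pstab G T)
  have hpt : ∀ y, (rk G (θmax y) : ENNReal) + A.indicator 1 y ≤ (rk G (θmax y ∪ θ y) : ENNReal) := by
    intro y
    by_cases hy : y ∈ A
    · rw [Set.indicator_of_mem hy, Pi.one_apply]
      have hlt : pstab G (θmax y ∪ θ y) < pstab G (θmax y) := by
        refine lt_of_le_of_ne (pstab_anti Finset.subset_union_left) ?_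
        intro hEq
        exact hy (hEq ▸ pstab_anti Finset.subset_union_right)
      have h3 := rk_lt_rk hbdd (Finset.subset_union_left : θmax y ⊆ θmax y ∪ θ y) hlt
      exact_mod_cast Nat.succ_le_of_lt h3
    · rw [Set.indicator_of_notMem hy, add_zero]
      exact_mod_cast rk_mono hbdd (Finset.subset_union_left : θmax y ⊆ θmax y ∪ θ y)
  have hmeasf : Measurable (fun y => (rk G (θmax y) : ENNReal)) :=
    meas_comp_countable θmax hθmaxSing (fun S => (rk G S : ENNReal))
  have hint : a θmax + μ A ≤ a (fun y => θmax y ∪ θ y) := by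
    have h1 : ∫⁻ y, ((rk G (θmax y) : ENNReal) + A.indicator 1 y) ∂μ ≤
        a (fun y => θmax y ∪ θ y) := lintegral_mono hpt
    rwa [lintegral_add_left hmeasf, lintegral_indicator_one hAmeas] at h1
  have hmu : μ A = 0 := by
    have h2 : a θmax + μ A ≤ a θmax + 0 := by
      rw [add_zero]
      exact hint.trans ((haM _ huGood).trans hMθ)
    have h3 := (ENNReal.add_le_add_iff_left hθtop).mp h2
    exact le_antisymm h3 zero_le'
  rw [ae_iff]
  exact hmu
end

section
/- Let X be a complete separable CAT(-1) space and G a countable group acting on X by isometries with countable discrete orbits. Then the horofunction compactification of X admits a Borel G-invariant partition into the set of horofunctions bounded from below and the set of horofunctions unbounded from below, and there is a G-equivariant Borel map from the bounded part to X, sending a bounded-below horofunction h to the circumcenter of the set of points of a fixed countable G-invariant dense-in-orbit set D where h is within 1 of its infimum. -/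
open Metric Set Bornology

/-- The embedding of `X` into `C(X,ℝ)` used to define the horofunction
compactification: `x ↦ (z ↦ d(z,x) − d(x₀,x))`. -/
noncomputable def iotaMap {X : Type*} [MetricSpace X] (x₀ : X) (x : X) : C(X, ℝ) :=
  ⟨fun z => dist z x - dist x₀ x, (continuous_id.dist continuous_const).sub continuous_const⟩

/-- The horofunction compactification of `X` (based at `x₀`): the closure of the image
of `iotaMap x₀` in `C(X,ℝ)` with the topology of uniform convergence on compacta. -/
noncomputable def HoroSet {X : Type*} [MetricSpace X] (x₀ : X) : Set C(X, ℝ) :=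
  closure (Set.range (iotaMap x₀))

namespace Stmt18Aux

open Real UpperHalfPlane

noncomputable def vpt (s : ℝ) : UpperHalfPlane := UpperHalfPlane.mk ⟨0, Real.exp s⟩ (Real.exp_pos s)

lemma vpt_dist (s t : ℝ) : dist (vpt s) (vpt t) = |s - t| := by
  have := (UpperHalfPlane.isometry_vertical_line 0).dist_eq s t
  simpa [vpt, Real.dist_eq] using this

lemma cosh_dist_vpt (w : UpperHalfPlane) (s : ℝ) :
    Real.cosh (dist w (vpt s)) =
      (w.re ^ 2 + w.im ^ 2 + Real.exp s ^ 2) / (2 * w.im * Real.exp s) := by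
  have h := UpperHalfPlane.cosh_dist w (vpt s)
  rw [h]
  have hvim : (vpt s).im = Real.exp s := rfl
  rw [hvim]
  have him : (0:ℝ) < w.im := w.im_pos
  have hes : (0:ℝ) < Real.exp s := Real.exp_pos s
  rw [Complex.dist_eq, Complex.sq_norm]
  have : Complex.normSq ((w : ℂ) - (vpt s : ℂ)) = w.re ^ 2 + (w.im - Real.exp s) ^ 2 := by
    simp [Complex.normSq_apply, Complex.sub_re, Complex.sub_im, UpperHalfPlane.coe_re,
      UpperHalfPlane.coe_im, vpt]
    ring
  rw [this]
  field_simp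
  ring

noncomputable def rot (θ : ℝ) : Matrix.SpecialLinearGroup (Fin 2) ℝ :=
  ⟨!![Real.cos θ, Real.sin θ; -Real.sin θ, Real.cos θ], by
    rw [Matrix.det_fin_two_of]
    nlinarith [Real.sin_sq_add_cos_sq θ]⟩

lemma rot_denom_ne (θ : ℝ) (z : UpperHalfPlane) :
    (-(Real.sin θ) : ℂ) * z + Real.cos θ ≠ 0 := by
  have := UpperHalfPlane.linear_ne_zero (cd := ![-Real.sin θ, Real.cos θ]) z (by
    intro hc
    have h0 := congrFun hc 0
    have h1 := congrFun hc 1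
    simp at h0 h1
    have := Real.sin_sq_add_cos_sq θ
    rw [h0, h1] at this; norm_num at this)
  simpa using this

lemma rot_coe (θ : ℝ) (z : UpperHalfPlane) :
    ((rot θ • z : UpperHalfPlane) : ℂ) =
      ((Real.cos θ : ℂ) * z + Real.sin θ) / (-(Real.sin θ : ℂ) * z + Real.cos θ) := by
  rw [UpperHalfPlane.specialLinearGroup_apply]
  simp only [UpperHalfPlane.coe_mk, rot]
  norm_num

lemma vpt_zero_coe : (vpt 0 : ℂ) = Complex.I := by
  simp [vpt, Complex.ext_iff]

lemma rot_fix (θ : ℝ) : rot θ • vpt 0 = vpt 0 := by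
  apply UpperHalfPlane.ext
  rw [rot_coe, vpt_zero_coe, div_eq_iff (by rw [← vpt_zero_coe]; exact rot_denom_ne θ (vpt 0))]
  linear_combination (Real.sin θ : ℂ) * Complex.I_sq

lemma rot_zero_smul (z : UpperHalfPlane) : rot 0 • z = z := by
  apply UpperHalfPlane.ext
  rw [rot_coe]
  simp

lemma vpt_coe' (s : ℝ) : (vpt s : ℂ) = (Real.exp s : ℂ) * Complex.I := by
  apply Complex.ext <;>
    simp [vpt, UpperHalfPlane.coe_mk, Complex.mul_I_re, Complex.mul_I_im, -Complex.ofReal_exp]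

lemma rot_pi_div_two_smul (A : ℝ) : rot (Real.pi/2) • vpt A = vpt (-A) := by
  apply UpperHalfPlane.ext
  rw [rot_coe]
  simp only [Real.cos_pi_div_two, Real.sin_pi_div_two]
  rw [vpt_coe', vpt_coe', div_eq_iff (by
    have := rot_denom_ne (Real.pi/2) (vpt A)
    simpa [Real.cos_pi_div_two, Real.sin_pi_div_two, vpt_coe'] using this)]
  have h1c : (Real.exp (-A) : ℂ) * (Real.exp A : ℂ) = 1 := by
    have h1 : Real.exp (-A) * Real.exp A = 1 := by rw [← Real.exp_add]; simp
    exact_mod_cast h1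
  push_cast
  simp only [← Complex.ofReal_neg, ← Complex.ofReal_exp]
  linear_combination ((Real.exp (-A) : ℂ) * (Real.exp A : ℂ)) * Complex.I_sq - h1c

lemma rot_vpt_geodesic (θ : ℝ) : IsGeodesicOn (fun t => rot θ • vpt t) 0 A := by
  intro s _ t _
  simp only [dist_smul]
  exact vpt_dist s t

lemma exists_comparison (L A Bd : ℝ) (hL : 0 ≤ L) (hA : 0 ≤ A) (hBd : 0 ≤ Bd)
    (h1 : L ≤ A + Bd) (h2 : A ≤ L + Bd) (h3 : Bd ≤ A + L) :
    ∃ (r' : UpperHalfPlane) (γ₂' : ℝ → UpperHalfPlane),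
      dist (vpt 0) r' = A ∧ dist (vpt L) r' = Bd ∧ γ₂' 0 = vpt 0 ∧ γ₂' A = r' ∧
      IsGeodesicOn γ₂' 0 A := by
  set c : ℝ → ℂ := fun θ =>
    ((Real.cos θ : ℂ) * (vpt A : ℂ) + Real.sin θ) /
      (-(Real.sin θ : ℂ) * (vpt A : ℂ) + Real.cos θ) with hc_def
  have hcoe : ∀ θ, ((rot θ • vpt A : UpperHalfPlane) : ℂ) = c θ := fun θ => rot_coe θ (vpt A)
  have him_pos : ∀ θ, 0 < (c θ).im := by
    intro θ
    rw [← hcoe θ]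
    exact (rot θ • vpt A).2
  have hc_cont : Continuous c := by
    apply Continuous.div
    · exact ((Complex.continuous_ofReal.comp Real.continuous_cos).mul continuous_const).add
        (Complex.continuous_ofReal.comp Real.continuous_sin)
    · exact (((Complex.continuous_ofReal.comp Real.continuous_sin).neg).mul continuous_const).add
        (Complex.continuous_ofReal.comp Real.continuous_cos)
    · intro θ
      exact rot_denom_ne θ (vpt A)
  set F : ℝ → ℝ := fun θ =>
    ((c θ).re ^ 2 + (c θ).im ^ 2 + Real.exp L ^ 2) / (2 * (c θ).im * Real.exp L) with hF_def
  have hre : Continuous fun θ => (c θ).re := Complex.continuous_re.comp hc_cont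
  have him : Continuous fun θ => (c θ).im := Complex.continuous_im.comp hc_cont
  have hF_cont : Continuous F := by
    apply Continuous.div
    · exact ((hre.pow 2).add (him.pow 2)).add continuous_const
    · exact (continuous_const.mul him).mul continuous_const
    · intro θ
      have := him_pos θ
      positivity
  have hFf : ∀ θ, F θ = Real.cosh (dist (rot θ • vpt A) (vpt L)) := by
    intro θ
    rw [cosh_dist_vpt]
    have h1' : (rot θ • vpt A).re = (c θ).re := by rw [← UpperHalfPlane.coe_re, hcoe]
    have h2' : (rot θ • vpt A).im = (c θ).im := by rw [← UpperHalfPlane.coe_im, hcoe]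
    rw [h1', h2']
  have hF0 : F 0 = Real.cosh (|A - L|) := by
    rw [hFf, rot_zero_smul, vpt_dist]
  have hFpi : F (Real.pi / 2) = Real.cosh (A + L) := by
    rw [hFf, rot_pi_div_two_smul, vpt_dist]
    have habs : |(-A) - L| = A + L := by
      rw [abs_sub_comm, sub_neg_eq_add, abs_of_nonneg (by linarith : (0:ℝ) ≤ L + A)]
      ring
    rw [habs]
  have hmem : Real.cosh Bd ∈ Set.Icc (F 0) (F (Real.pi / 2)) := by
    constructor
    · rw [hF0, Real.cosh_le_cosh, abs_abs, abs_of_nonneg hBd, abs_le]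
      exact ⟨by linarith, by linarith⟩
    · rw [hFpi, Real.cosh_le_cosh, abs_of_nonneg hBd,
        abs_of_nonneg (by linarith : (0:ℝ) ≤ A + L)]
      exact h3
  obtain ⟨θ, _, hθ⟩ := intermediate_value_Icc (by positivity : (0:ℝ) ≤ Real.pi / 2)
    hF_cont.continuousOn hmem
  refine ⟨rot θ • vpt A, fun t => rot θ • vpt t, ?_, ?_, rot_fix θ, rfl, rot_vpt_geodesic θ⟩
  · rw [← rot_fix θ, dist_smul, vpt_dist]
    simpa using abs_of_nonneg hA
  · have hd : Real.cosh (dist (rot θ • vpt A) (vpt L)) = Real.cosh Bd := by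
      rw [← hFf, hθ]
    have := Real.cosh_strictMonoOn.injOn (Set.mem_Ici.mpr dist_nonneg)
      (Set.mem_Ici.mpr hBd) hd
    rw [dist_comm]
    exact this

lemma median_identity (w : UpperHalfPlane) (L : ℝ) :
    Real.cosh (dist w (vpt (L / 2))) * Real.cosh (L / 2) =
      (Real.cosh (dist w (vpt 0)) + Real.cosh (dist w (vpt L))) / 2 := by
  rw [cosh_dist_vpt, cosh_dist_vpt, cosh_dist_vpt, Real.cosh_eq]
  have him : (0:ℝ) < w.im := w.im_pos
  have h0 : Real.exp (0:ℝ) = 1 := Real.exp_zero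
  have hL : Real.exp L = Real.exp (L/2) * Real.exp (L/2) := by
    rw [← Real.exp_add]; ring_nf
  have hI : Real.exp (-(L/2)) = (Real.exp (L/2))⁻¹ := by
    rw [← Real.exp_neg]
  have hpos : (0:ℝ) < Real.exp (L/2) := Real.exp_pos _
  rw [h0, hI, hL]
  field_simp
  ring

/-- Master comparison lemma in the hyperbolic plane. -/
lemma comparison_median (L A Bd : ℝ) (hL : 0 ≤ L) (hA : 0 ≤ A) (hBd : 0 ≤ Bd)
    (h1 : L ≤ A + Bd) (h2 : A ≤ L + Bd) (h3 : Bd ≤ A + L) :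
    ∃ (p' q' r' : UpperHalfPlane) (γ₁' γ₂' : ℝ → UpperHalfPlane),
      dist p' q' = L ∧ dist p' r' = A ∧ dist q' r' = Bd ∧
      γ₁' 0 = p' ∧ γ₁' L = q' ∧ IsGeodesicOn γ₁' 0 L ∧
      γ₂' 0 = p' ∧ γ₂' A = r' ∧ IsGeodesicOn γ₂' 0 A ∧
      Real.cosh (dist (γ₁' (L/2)) r') * Real.cosh (L/2) =
        (Real.cosh A + Real.cosh Bd) / 2 := by
  obtain ⟨r', γ₂', hd0, hdL, hg0, hgA, hgeo⟩ := exists_comparison L A Bd hL hA hBd h1 h2 h3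
  refine ⟨vpt 0, vpt L, r', vpt, γ₂', ?_, hd0, hdL, rfl, rfl, fun s _ t _ => vpt_dist s t,
    hg0, hgA, hgeo, ?_⟩
  · rw [vpt_dist]; simpa using abs_of_nonneg hL
  · have := median_identity r' L
    rw [dist_comm (vpt (L/2)) r', this, dist_comm r' (vpt 0), dist_comm r' (vpt L), hd0, hdL]

/-- The CN-type (cosh) inequality for midpoints in a CAT(-1) space, together with
the existence of midpoints. -/
lemma exists_midpoint_CN {X : Type*} [MetricSpace X] (hX : IsCATMinusOne X)
    (x y : X) :
    ∃ m : X, dist x m = dist x y / 2 ∧ dist m y = dist x y / 2 ∧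
      ∀ b : X, Real.cosh (dist b m) * Real.cosh (dist x y / 2) ≤
        (Real.cosh (dist x b) + Real.cosh (dist y b)) / 2 := by
  obtain ⟨γ₁, hγ10, hγ1L, hγ1⟩ := hX.1 x y
  set L := dist x y with hL_def
  have hL : 0 ≤ L := dist_nonneg
  have hhalf : L / 2 ∈ Set.Icc (0:ℝ) L := ⟨by linarith, by linarith⟩
  have h0mem : (0:ℝ) ∈ Set.Icc (0:ℝ) L := ⟨le_refl _, hL⟩
  have hLmem : L ∈ Set.Icc (0:ℝ) L := ⟨hL, le_refl _⟩
  refine ⟨γ₁ (L/2), ?_, ?_, ?_⟩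
  · rw [← hγ10]
    rw [hγ1 0 h0mem (L/2) hhalf]
    rw [abs_of_nonpos (by linarith)]; ring
  · rw [← hγ1L]
    rw [hγ1 (L/2) hhalf L hLmem]
    rw [abs_of_nonpos (by linarith)]; ring
  · intro b
    obtain ⟨γ₂, hγ20, hγ2A, hγ2⟩ := hX.1 x b
    set A := dist x b with hA_def
    set Bd := dist y b with hBd_def
    have hA : 0 ≤ A := dist_nonneg
    have hBd : 0 ≤ Bd := dist_nonneg
    have h1 : L ≤ A + Bd := by
      rw [hL_def, hA_def, hBd_def, dist_comm y b]
      exact dist_triangle x b y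
    have h2 : A ≤ L + Bd := by
      rw [hL_def, hA_def, hBd_def]
      exact dist_triangle x y b
    have h3 : Bd ≤ A + L := by
      rw [hL_def, hA_def, hBd_def, dist_comm x y]
      calc dist y b ≤ dist y x + dist x b := dist_triangle y x b
      _ = dist x b + dist y x := by ring
    obtain ⟨p', q', r', γ₁', γ₂', hpq, hpr, hqr, hg10, hg1L, hg1, hg20, hg2A, hg2, hmed⟩ :=
      comparison_median L A Bd hL hA hBd h1 h2 h3
    have hcomp := hX.2 x y b γ₁ γ₂ hγ10 hγ1L hγ1 hγ20 hγ2A hγ2 p' q' r' γ₁' γ₂'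
      hpq hpr hqr hg10 hg1L hg1 hg20 hg2A hg2 (L/2) hhalf A ⟨hA, le_refl _⟩
    rw [hγ2A] at hcomp
    have hcosh : Real.cosh (dist (γ₁ (L/2)) b) ≤ Real.cosh (dist (γ₁' (L/2)) r') := by
      rw [Real.cosh_le_cosh, abs_of_nonneg dist_nonneg, abs_of_nonneg dist_nonneg]
      rwa [hg2A] at hcomp
    have hpos : 0 < Real.cosh (L/2) := Real.cosh_pos _
    rw [dist_comm b (γ₁ (L/2))]
    calc Real.cosh (dist (γ₁ (L/2)) b) * Real.cosh (L/2)
        ≤ Real.cosh (dist (γ₁' (L/2)) r') * Real.cosh (L/2) := by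
          exact mul_le_mul_of_nonneg_right hcosh hpos.le
      _ = (Real.cosh A + Real.cosh Bd) / 2 := hmed


/-- Midpoints exist, with the CAT(-1) `cosh` comparison inequality. -/
def MidCN (X : Type*) [MetricSpace X] : Prop :=
  ∀ x y : X, ∃ m : X, dist x m = dist x y / 2 ∧ dist m y = dist x y / 2 ∧
    ∀ b : X, Real.cosh (dist b m) * Real.cosh (dist x y / 2) ≤
      (Real.cosh (dist x b) + Real.cosh (dist y b)) / 2

lemma exists_cosh_eq {t : ℝ} (ht : 1 ≤ t) : ∃ s : ℝ, 0 ≤ s ∧ Real.cosh s = t := by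
  have h2t : (0:ℝ) ≤ 2 * t := by linarith
  have hup : t ≤ Real.cosh (2 * t) := by
    have h1 : Real.exp (2*t) ≤ 2 * Real.cosh (2*t) := by
      rw [Real.cosh_eq]
      have := Real.exp_pos (-(2*t))
      linarith
    have h2 := Real.add_one_le_exp (2*t)
    linarith
  have hmem : t ∈ Set.Icc (Real.cosh 0) (Real.cosh (2*t)) := by
    rw [Real.cosh_zero]; exact ⟨ht, hup⟩
  obtain ⟨s, hs, hcs⟩ := intermediate_value_Icc h2t Real.continuous_cosh.continuousOn hmem
  exact ⟨s, hs.1, hcs⟩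

lemma sq_half_le_cosh (x : ℝ) : 1 + x ^ 2 / 2 ≤ Real.cosh x := by
  rcases le_total 0 x with hx | hx
  · have h1 : Real.cosh x = 1 + 2 * Real.sinh (x/2) ^ 2 := by
      have h2 : x = 2 * (x/2) := by ring
      rw [h2, Real.cosh_two_mul, Real.cosh_sq']
      ring
    have h3 : x / 2 ≤ Real.sinh (x/2) := by
      rw [Real.self_le_sinh_iff]; linarith
    nlinarith [Real.sinh_nonneg_iff.mpr (by linarith : (0:ℝ) ≤ x/2)]
  · have := Real.cosh_neg x
    have h1 : 1 + (-x) ^ 2 / 2 ≤ Real.cosh (-x) := by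
      have h2 : Real.cosh (-x) = 1 + 2 * Real.sinh (-x/2) ^ 2 := by
        have h3 : -x = 2 * (-x/2) := by ring
        rw [h3, Real.cosh_two_mul, Real.cosh_sq']
        ring
      have h4 : -x / 2 ≤ Real.sinh (-x/2) := by
        rw [Real.self_le_sinh_iff]; linarith
      nlinarith [Real.sinh_nonneg_iff.mpr (by linarith : (0:ℝ) ≤ -x/2)]
    rw [this] at h1
    nlinarith [h1]

variable {X : Type*} [MetricSpace X]

/-- The covering radius of `B` seen from `x`. -/
noncomputable def rad (B : Set X) (x : X) : ℝ := sSup ((fun b => dist x b) '' B)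

lemma bddAbove_rad {B : Set X} (hbd : IsBounded B) (x : X) :
    BddAbove ((fun b => dist x b) '' B) := by
  obtain ⟨C, hC⟩ := hbd.subset_closedBall x
  exact ⟨C, by rintro _ ⟨b, hb, rfl⟩; simpa [Metric.mem_closedBall, dist_comm] using hC hb⟩

lemma dist_le_rad {B : Set X} (hbd : IsBounded B) {x : X} {b : X} (hb : b ∈ B) :
    dist x b ≤ rad B x :=
  le_csSup (bddAbove_rad hbd x) ⟨b, hb, rfl⟩

lemma rad_nonneg {B : Set X} (hne : B.Nonempty) (hbd : IsBounded B) (x : X) :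
    0 ≤ rad B x := by
  obtain ⟨b, hb⟩ := hne
  exact le_trans dist_nonneg (dist_le_rad hbd hb)

lemma subset_closedBall_iff_rad_le {B : Set X} (hne : B.Nonempty) (hbd : IsBounded B)
    {x : X} {r : ℝ} : B ⊆ closedBall x r ↔ rad B x ≤ r := by
  constructor
  · intro h
    apply csSup_le (hne.image _)
    rintro _ ⟨b, hb, rfl⟩
    simpa [Metric.mem_closedBall, dist_comm] using h hb
  · intro h b hb
    rw [Metric.mem_closedBall, dist_comm]
    exact (dist_le_rad hbd hb).trans h

lemma circumradius_eq_sInf_rad {B : Set X} (hne : B.Nonempty) (hbd : IsBounded B) :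
    circumradius B = sInf (Set.range (rad B)) := by
  rcases isEmpty_or_nonempty X with hX | hX
  · obtain ⟨b, _⟩ := hne; exact (hX.false b).elim
  apply le_antisymm
  · apply le_csInf (Set.range_nonempty _)
    rintro _ ⟨x, rfl⟩
    apply csInf_le ⟨0, fun r hr => hr.1⟩
    exact ⟨rad_nonneg hne hbd x, x,
      (subset_closedBall_iff_rad_le hne hbd).mpr (le_refl _)⟩
  · apply le_csInf
    · obtain ⟨x⟩ := hX
      obtain ⟨C, hC⟩ := hbd.subset_closedBall x
      exact ⟨max C 0, le_max_right _ _, x, hC.trans (closedBall_subset_closedBall (le_max_left _ _))⟩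
    · rintro r ⟨hr0, x, hx⟩
      have h1 : rad B x ≤ r := (subset_closedBall_iff_rad_le hne hbd).mp hx
      exact le_trans (csInf_le ⟨0, by rintro _ ⟨y, rfl⟩; exact rad_nonneg hne hbd y⟩ ⟨x, rfl⟩) h1

/-- Key convexity estimate: for two approximate circumcenters `x, y`,
`cosh (dist x y / 2) * cosh R ≤ (cosh (rad B x) + cosh (rad B y)) / 2`. -/
lemma cosh_half_dist_le (hmid : MidCN X) {B : Set X} (hne : B.Nonempty) (hbd : IsBounded B)
    (x y : X) :
    Real.cosh (dist x y / 2) * Real.cosh (circumradius B) ≤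
      (Real.cosh (rad B x) + Real.cosh (rad B y)) / 2 := by
  obtain ⟨m, hxm, hmy, hCN⟩ := hmid x y
  set T : ℝ := (Real.cosh (rad B x) + Real.cosh (rad B y)) / 2 with hT_def
  have hb_bound : ∀ b ∈ B, Real.cosh (dist b m) * Real.cosh (dist x y / 2) ≤ T := by
    intro b hb
    refine (hCN b).trans ?_
    have h1 : Real.cosh (dist x b) ≤ Real.cosh (rad B x) := by
      rw [Real.cosh_le_cosh, abs_of_nonneg dist_nonneg,
        abs_of_nonneg (rad_nonneg hne hbd x)]
      exact dist_le_rad hbd hb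
    have h2 : Real.cosh (dist y b) ≤ Real.cosh (rad B y) := by
      rw [Real.cosh_le_cosh, abs_of_nonneg dist_nonneg,
        abs_of_nonneg (rad_nonneg hne hbd y)]
      exact dist_le_rad hbd hb
    rw [hT_def]; linarith
  obtain ⟨b₀, hb₀⟩ := id hne
  haveI : Nonempty X := ⟨b₀⟩
  have hch : (0:ℝ) < Real.cosh (dist x y / 2) := Real.cosh_pos _
  have hcoshd_le : Real.cosh (dist x y / 2) ≤ T := by
    have := hb_bound b₀ hb₀
    nlinarith [Real.one_le_cosh (dist b₀ m)]
  have ht1 : 1 ≤ T / Real.cosh (dist x y / 2) := by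
    rw [le_div_iff₀ hch]; linarith
  obtain ⟨s, hs0, hcs⟩ := exists_cosh_eq ht1
  have hrad_m : rad B m ≤ s := by
    apply csSup_le (hne.image _)
    rintro _ ⟨b, hb, rfl⟩
    have h1 : Real.cosh (dist m b) ≤ Real.cosh s := by
      rw [hcs, le_div_iff₀ hch, dist_comm m b]
      exact hb_bound b hb
    rw [Real.cosh_le_cosh, abs_of_nonneg dist_nonneg, abs_of_nonneg hs0] at h1
    exact h1
  have hR_le : circumradius B ≤ s := by
    rw [circumradius_eq_sInf_rad hne hbd]
    exact le_trans (csInf_le ⟨0, by rintro _ ⟨z, rfl⟩; exact rad_nonneg hne hbd z⟩ ⟨m, rfl⟩) hrad_m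
  have hcR : Real.cosh (circumradius B) ≤ Real.cosh s := by
    rw [Real.cosh_le_cosh]
    have h0R : 0 ≤ circumradius B := by
      rw [circumradius_eq_sInf_rad hne hbd]
      apply le_csInf (Set.range_nonempty _)
      rintro _ ⟨z, rfl⟩; exact rad_nonneg hne hbd z
    rw [abs_of_nonneg h0R, abs_of_nonneg hs0]
    exact hR_le
  calc Real.cosh (dist x y / 2) * Real.cosh (circumradius B)
      ≤ Real.cosh (dist x y / 2) * Real.cosh s := by nlinarith
    _ = T := by rw [hcs]; field_simp

lemma circumradius_nonneg {B : Set X} (hne : B.Nonempty) (hbd : IsBounded B) :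
    0 ≤ circumradius B := by
  haveI : Nonempty X := ⟨hne.some⟩
  rw [circumradius_eq_sInf_rad hne hbd]
  apply le_csInf (Set.range_nonempty _)
  rintro _ ⟨z, rfl⟩; exact rad_nonneg hne hbd z

/-- Quantitative stability of approximate circumcenters. -/
lemma dist_le_of_rad_le (hmid : MidCN X) {B : Set X} (hne : B.Nonempty) (hbd : IsBounded B)
    {x y : X} {a b : ℝ} (hx : rad B x ≤ a) (hy : rad B y ≤ b)
    (ha : 0 ≤ a) (hb : 0 ≤ b) :
    dist x y ≤ 2 * Real.sqrt (2 * ((Real.cosh a + Real.cosh b) /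
      (2 * Real.cosh (circumradius B)) - 1)) := by
  have hkey := cosh_half_dist_le hmid hne hbd x y
  have hcRpos : (0:ℝ) < Real.cosh (circumradius B) := Real.cosh_pos _
  have hca : Real.cosh (rad B x) ≤ Real.cosh a := by
    rw [Real.cosh_le_cosh, abs_of_nonneg (rad_nonneg hne hbd x), abs_of_nonneg ha]
    exact hx
  have hcb : Real.cosh (rad B y) ≤ Real.cosh b := by
    rw [Real.cosh_le_cosh, abs_of_nonneg (rad_nonneg hne hbd y), abs_of_nonneg hb]
    exact hy
  set u : ℝ := (Real.cosh a + Real.cosh b) / (2 * Real.cosh (circumradius B)) with hu_def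
  have hcosh_half : Real.cosh (dist x y / 2) ≤ u := by
    rw [hu_def, le_div_iff₀ (by positivity)]
    have h1 : Real.cosh (circumradius B) ≥ 1 := Real.one_le_cosh _
    nlinarith [Real.cosh_pos (circumradius B)]
  have hq := sq_half_le_cosh (dist x y / 2)
  have h2 : (dist x y / 2) ^ 2 ≤ 2 * (u - 1) := by nlinarith
  have h3 : dist x y / 2 ≤ Real.sqrt (2 * (u - 1)) := by
    rw [← Real.sqrt_sq (by positivity : (0:ℝ) ≤ dist x y / 2)]
    exact Real.sqrt_le_sqrt h2
  linarith [h3]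

/-- Existence and uniqueness of the circumcenter. -/
lemma exists_unique_center [CompleteSpace X] (hmid : MidCN X) {B : Set X}
    (hne : B.Nonempty) (hbd : IsBounded B) :
    ∃ z : X, B ⊆ closedBall z (circumradius B) ∧
      ∀ w : X, B ⊆ closedBall w (circumradius B) → w = z := by
  set R := circumradius B with hR_def
  have hR0 : 0 ≤ R := circumradius_nonneg hne hbd
  haveI : Nonempty X := ⟨hne.some⟩
  -- approximate centers
  have hex : ∀ n : ℕ, ∃ x : X, rad B x ≤ R + 1/(n+1) := by
    intro n
    have hlt : sInf (Set.range (rad B)) < R + 1/(n+1) := by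
      rw [← circumradius_eq_sInf_rad hne hbd]
      have : (0:ℝ) < 1/((n:ℝ)+1) := by positivity
      linarith
    obtain ⟨_, ⟨x, rfl⟩, hx⟩ := exists_lt_of_csInf_lt (Set.range_nonempty _) hlt
    exact ⟨x, hx.le⟩
  choose u hu using hex
  -- Cauchy
  set bnd : ℕ → ℝ := fun N =>
    2 * Real.sqrt (2 * ((Real.cosh (R + 1/(N+1)) + Real.cosh (R + 1/(N+1))) /
      (2 * Real.cosh R) - 1)) with hbnd_def
  have hcauchy : CauchySeq u := by
    apply cauchySeq_of_le_tendsto_0 bnd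
    · intro n m N hn hm
      have h1 : rad B (u n) ≤ R + 1/(N+1) := by
        refine (hu n).trans ?_
        have : 1/((n:ℝ)+1) ≤ 1/((N:ℝ)+1) := by
          apply one_div_le_one_div_of_le (by positivity)
          have := (Nat.cast_le (α := ℝ)).mpr hn
          linarith
        linarith
      have h2 : rad B (u m) ≤ R + 1/(N+1) := by
        refine (hu m).trans ?_
        have : 1/((m:ℝ)+1) ≤ 1/((N:ℝ)+1) := by
          apply one_div_le_one_div_of_le (by positivity)
          have := (Nat.cast_le (α := ℝ)).mpr hm
          linarith
        linarith
      exact dist_le_of_rad_le hmid hne hbd h1 h2 (by positivity) (by positivity)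
    · -- bnd → 0
      have h1 : Filter.Tendsto (fun N : ℕ => R + 1/((N:ℝ)+1)) Filter.atTop (nhds R) := by
        have := tendsto_one_div_add_atTop_nhds_zero_nat (𝕜 := ℝ)
        have h2 := Filter.Tendsto.const_add R this
        simpa using h2
      have h3 : Filter.Tendsto (fun N : ℕ => Real.cosh (R + 1/((N:ℝ)+1))) Filter.atTop
          (nhds (Real.cosh R)) := (Real.continuous_cosh.tendsto R).comp h1
      have h4 : Filter.Tendsto bnd Filter.atTop
          (nhds (2 * Real.sqrt (2 * ((Real.cosh R + Real.cosh R) / (2 * Real.cosh R) - 1)))) := by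
        apply Filter.Tendsto.const_mul
        apply (Real.continuous_sqrt.tendsto _).comp
        apply Filter.Tendsto.const_mul
        apply Filter.Tendsto.sub_const
        exact (h3.add h3).div tendsto_const_nhds (by positivity)
      have h5 : 2 * Real.sqrt (2 * ((Real.cosh R + Real.cosh R) / (2 * Real.cosh R) - 1)) = 0 := by
        have : (Real.cosh R + Real.cosh R) / (2 * Real.cosh R) = 1 := by
          field_simp; ring
        rw [this]
        simp
      rwa [h5] at h4
  obtain ⟨z, hz⟩ := cauchySeq_tendsto_of_complete hcauchy
  have hmem : B ⊆ closedBall z R := by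
    intro b hb
    rw [Metric.mem_closedBall]
    have hdist : Filter.Tendsto (fun n => dist b (u n)) Filter.atTop (nhds (dist b z)) :=
      (Continuous.tendsto (continuous_const.dist continuous_id) z).comp hz
    have hg : Filter.Tendsto (fun n : ℕ => R + 1/((n:ℝ)+1)) Filter.atTop (nhds R) := by
      have := tendsto_one_div_add_atTop_nhds_zero_nat (𝕜 := ℝ)
      simpa using Filter.Tendsto.const_add R this
    refine le_of_tendsto_of_tendsto' hdist hg (fun n => ?_)
    calc dist b (u n) = dist (u n) b := dist_comm _ _
      _ ≤ rad B (u n) := dist_le_rad hbd hb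
      _ ≤ R + 1/(n+1) := hu n
  refine ⟨z, hmem, fun w hw => ?_⟩
  have hradw : rad B w ≤ R := (subset_closedBall_iff_rad_le hne hbd).mp hw
  have hradz : rad B z ≤ R := (subset_closedBall_iff_rad_le hne hbd).mp hmem
  have hkey := cosh_half_dist_le hmid hne hbd w z
  have hcw : Real.cosh (rad B w) ≤ Real.cosh R := by
    rw [Real.cosh_le_cosh, abs_of_nonneg (rad_nonneg hne hbd w), abs_of_nonneg hR0]
    exact hradw
  have hcz : Real.cosh (rad B z) ≤ Real.cosh R := by
    rw [Real.cosh_le_cosh, abs_of_nonneg (rad_nonneg hne hbd z), abs_of_nonneg hR0]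
    exact hradz
  have h1 : Real.cosh (dist w z / 2) ≤ 1 := by
    have hcRpos : (0:ℝ) < Real.cosh R := Real.cosh_pos _
    nlinarith
  have h2 := sq_half_le_cosh (dist w z / 2)
  have h3 : dist w z = 0 := by nlinarith [dist_nonneg (x := w) (y := z)]
  exact dist_eq_zero.mp h3

/-- The circumcenter really is the unique circumcenter. -/
lemma circumcenter_spec [CompleteSpace X] [Nonempty X] (hmid : MidCN X) {B : Set X}
    (hne : B.Nonempty) (hbd : IsBounded B) :
    B ⊆ closedBall (circumcenter B) (circumradius B) := by
  obtain ⟨z, hz, _⟩ := exists_unique_center hmid hne hbd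
  exact Classical.epsilon_spec (p := fun x : X => B ⊆ closedBall x (circumradius B)) ⟨z, hz⟩

lemma eq_circumcenter [CompleteSpace X] [Nonempty X] (hmid : MidCN X) {B : Set X}
    (hne : B.Nonempty) (hbd : IsBounded B) {w : X}
    (hw : B ⊆ closedBall w (circumradius B)) : w = circumcenter B := by
  obtain ⟨z, hz, huniq⟩ := exists_unique_center hmid hne hbd
  rw [huniq w hw, huniq (circumcenter B) (circumcenter_spec hmid hne hbd)]

/-- Stability: approximate circumcenters are close to the circumcenter. -/
lemma dist_circumcenter_le [CompleteSpace X] [Nonempty X] (hmid : MidCN X) {B : Set X}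
    (hne : B.Nonempty) (hbd : IsBounded B) {x : X} {ε : ℝ} (hε : 0 ≤ ε)
    (hx : rad B x ≤ circumradius B + ε) :
    dist x (circumcenter B) ≤ 2 * Real.sqrt (2 * ((Real.cosh (circumradius B + ε) +
      Real.cosh (circumradius B)) / (2 * Real.cosh (circumradius B)) - 1)) := by
  have hR0 : 0 ≤ circumradius B := circumradius_nonneg hne hbd
  exact dist_le_of_rad_le hmid hne hbd hx
    ((subset_closedBall_iff_rad_le hne hbd).mp (circumcenter_spec hmid hne hbd))
    (by linarith) hR0


lemma rad_le_rad_add_dist {B : Set X} (hne : B.Nonempty) (hbd : IsBounded B) (x y : X) :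
    rad B x ≤ rad B y + dist x y := by
  apply csSup_le (hne.image _)
  rintro _ ⟨b, hb, rfl⟩
  calc dist x b ≤ dist x y + dist y b := dist_triangle x y b
    _ ≤ dist x y + rad B y := by linarith [dist_le_rad hbd hb (x := y)]
    _ = rad B y + dist x y := by ring

lemma bddBelow_range_rad {B : Set X} (hne : B.Nonempty) (hbd : IsBounded B) :
    BddBelow (Set.range (rad B)) :=
  ⟨0, by rintro _ ⟨z, rfl⟩; exact rad_nonneg hne hbd z⟩

lemma circumradius_eq_sInf_dense {B : Set X} (hne : B.Nonempty) (hbd : IsBounded B)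
    {q : ℕ → X} (hq : DenseRange q) :
    sInf (Set.range (fun k => rad B (q k))) = circumradius B := by
  haveI : Nonempty X := ⟨hne.some⟩
  have hbb : BddBelow (Set.range fun k => rad B (q k)) :=
    ⟨0, by rintro _ ⟨k, rfl⟩; exact rad_nonneg hne hbd (q k)⟩
  apply le_antisymm
  · apply le_of_forall_pos_le_add
    intro ε hε
    rw [circumradius_eq_sInf_rad hne hbd]
    have hlt : sInf (Set.range (rad B)) < sInf (Set.range (rad B)) + ε/2 := by linarith
    obtain ⟨_, ⟨x, rfl⟩, hx⟩ := exists_lt_of_csInf_lt (Set.range_nonempty _) hlt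
    obtain ⟨k, hk⟩ := Metric.denseRange_iff.mp hq x (ε/2) (by linarith)
    have h1 : rad B (q k) ≤ rad B x + dist (q k) x := rad_le_rad_add_dist hne hbd _ _
    have h2 : sInf (Set.range fun k => rad B (q k)) ≤ rad B (q k) := csInf_le hbb ⟨k, rfl⟩
    rw [dist_comm] at hk
    linarith
  · rw [circumradius_eq_sInf_rad hne hbd]
    apply le_csInf (Set.range_nonempty _)
    rintro _ ⟨k, rfl⟩
    exact csInf_le (bddBelow_range_rad hne hbd) ⟨q k, rfl⟩

lemma circumradius_image {B : Set X} {f : X → X} (hf : Isometry f)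
    (hsurj : Function.Surjective f) :
    circumradius (f '' B) = circumradius B := by
  unfold circumradius
  congr 1
  ext r
  simp only [Set.mem_setOf_eq]
  constructor
  · rintro ⟨hr0, x, hx⟩
    obtain ⟨y, rfl⟩ := hsurj x
    refine ⟨hr0, y, fun b hb => ?_⟩
    have := hx ⟨b, hb, rfl⟩
    rw [Metric.mem_closedBall] at this ⊢
    rwa [hf.dist_eq] at this
  · rintro ⟨hr0, x, hx⟩
    refine ⟨hr0, f x, ?_⟩
    rintro _ ⟨b, hb, rfl⟩
    rw [Metric.mem_closedBall, hf.dist_eq]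
    exact hx hb

lemma circumcenter_image [CompleteSpace X] [Nonempty X] (hmid : MidCN X) {B : Set X}
    (hne : B.Nonempty) (hbd : IsBounded B) {f : X → X} (hf : Isometry f)
    (hsurj : Function.Surjective f) :
    circumcenter (f '' B) = f (circumcenter B) := by
  have hne' : (f '' B).Nonempty := hne.image f
  have hbd' : IsBounded (f '' B) := (hf.lipschitz.isBounded_image hbd)
  symm
  apply eq_circumcenter hmid hne' hbd'
  rw [circumradius_image hf hsurj]
  rintro _ ⟨b, hb, rfl⟩
  rw [Metric.mem_closedBall, hf.dist_eq]
  exact circumcenter_spec hmid hne hbd hb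



variable {X : Type*} [MetricSpace X]

lemma horo_exp (hmid : MidCN X) (x₀ : X) (a c : X) :
    ∃ m : X, dist a m = dist a c / 2 ∧ dist m c = dist a c / 2 ∧
      ∀ h ∈ HoroSet x₀,
        Real.exp (h m) * Real.cosh (dist a c / 2) ≤ Real.exp (h a) + Real.exp (h c) := by
  obtain ⟨m, ham, hmc, hCN⟩ := hmid a c
  refine ⟨m, ham, hmc, ?_⟩
  have hclosed : IsClosed {h : C(X, ℝ) |
      Real.exp (h m) * Real.cosh (dist a c / 2) ≤ Real.exp (h a) + Real.exp (h c)} := by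
    apply isClosed_le
    · exact (Real.continuous_exp.comp (continuous_eval_const m)).mul continuous_const
    · exact (Real.continuous_exp.comp (continuous_eval_const a)).add
        (Real.continuous_exp.comp (continuous_eval_const c))
  have hrange : Set.range (iotaMap x₀) ⊆ {h : C(X, ℝ) |
      Real.exp (h m) * Real.cosh (dist a c / 2) ≤ Real.exp (h a) + Real.exp (h c)} := by
    rintro _ ⟨x, rfl⟩
    simp only [Set.mem_setOf_eq, iotaMap, ContinuousMap.coe_mk]
    have hexp_le : ∀ t : ℝ, 0 ≤ t → Real.exp t ≤ 2 * Real.cosh t := by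
      intro t _
      rw [Real.cosh_eq]
      have := (Real.exp_pos (-t)).le
      linarith
    have hcosh_le : ∀ t : ℝ, 0 ≤ t → Real.cosh t ≤ Real.exp t := by
      intro t ht
      rw [Real.cosh_eq]
      have h1 : Real.exp (-t) ≤ Real.exp t := by
        apply Real.exp_le_exp.mpr; linarith
      linarith
    have key : Real.exp (dist m x) * Real.cosh (dist a c / 2) ≤
        Real.exp (dist a x) + Real.exp (dist c x) := by
      have h1 := hexp_le (dist m x) dist_nonneg
      have h2 := hcosh_le (dist a x) dist_nonneg
      have h3 := hcosh_le (dist c x) dist_nonneg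
      have hchp : (0:ℝ) < Real.cosh (dist a c / 2) := Real.cosh_pos _
      have hb := hCN x
      rw [dist_comm x m] at hb
      nlinarith [mul_le_mul_of_nonneg_right h1 hchp.le]
    have hpos : (0:ℝ) < Real.exp (-(dist x₀ x)) := Real.exp_pos _
    have expand : ∀ z : X, Real.exp (dist z x - dist x₀ x) =
        Real.exp (dist z x) * Real.exp (-(dist x₀ x)) := by
      intro z; rw [← Real.exp_add]; ring_nf
    rw [expand m, expand a, expand c]
    calc Real.exp (dist m x) * Real.exp (-(dist x₀ x)) * Real.cosh (dist a c / 2)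
        = (Real.exp (dist m x) * Real.cosh (dist a c / 2)) * Real.exp (-(dist x₀ x)) := by ring
      _ ≤ (Real.exp (dist a x) + Real.exp (dist c x)) * Real.exp (-(dist x₀ x)) := by
          exact mul_le_mul_of_nonneg_right key hpos.le
      _ = Real.exp (dist a x) * Real.exp (-(dist x₀ x)) +
          Real.exp (dist c x) * Real.exp (-(dist x₀ x)) := by ring
  intro h hh
  exact closure_minimal hrange hclosed hh



lemma sublevel_nonempty_bounded {X : Type*} [MetricSpace X] (hmid : MidCN X) (x₀ : X)
    {D : Set X} (hDne : D.Nonempty) {h : C(X, ℝ)} (hh : h ∈ HoroSet x₀)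
    (hbdd : BddBelow (Set.range (h : X → ℝ))) :
    {x | x ∈ D ∧ h x ≤ sInf ((h : X → ℝ) '' D) + 1}.Nonempty ∧
      IsBounded {x | x ∈ D ∧ h x ≤ sInf ((h : X → ℝ) '' D) + 1} := by
  obtain ⟨β, hβ⟩ := hbdd
  have hImne : ((h : X → ℝ) '' D).Nonempty := hDne.image _
  set J : ℝ := sInf ((h : X → ℝ) '' D) + 1 with hJ_def
  constructor
  · have hlt : sInf ((h : X → ℝ) '' D) < J := by rw [hJ_def]; linarith
    obtain ⟨_, ⟨x, hxD, rfl⟩, hx⟩ := exists_lt_of_csInf_lt hImne hlt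
    exact ⟨x, hxD, hx.le⟩
  · rw [Metric.isBounded_iff]
    set K : ℝ := 2 * Real.exp (J - β) with hK_def
    have hKpos : 0 < K := by rw [hK_def]; positivity
    refine ⟨2 * Real.sqrt (2 * K), ?_⟩
    intro x hx y hy
    obtain ⟨m, _, _, hq⟩ := horo_exp hmid x₀ x y
    have hq' := hq h hh
    have hβm : β ≤ h m := hβ (Set.mem_range_self m)
    have h1 : Real.exp (h x) ≤ Real.exp J := Real.exp_le_exp.mpr hx.2
    have h2 : Real.exp (h y) ≤ Real.exp J := Real.exp_le_exp.mpr hy.2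
    have h3 : Real.exp β ≤ Real.exp (h m) := Real.exp_le_exp.mpr hβm
    have hexpβ : (0:ℝ) < Real.exp β := Real.exp_pos β
    have hch : Real.cosh (dist x y / 2) ≤ K := by
      have hmain : Real.exp β * Real.cosh (dist x y / 2) ≤ 2 * Real.exp J := by
        calc Real.exp β * Real.cosh (dist x y / 2)
            ≤ Real.exp (h m) * Real.cosh (dist x y / 2) :=
              mul_le_mul_of_nonneg_right h3 (Real.cosh_pos _).le
          _ ≤ Real.exp (h x) + Real.exp (h y) := hq'
          _ ≤ 2 * Real.exp J := by linarith
      have hdiv : Real.cosh (dist x y / 2) ≤ (2 * Real.exp J) / Real.exp β :=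
        (le_div_iff₀ hexpβ).mpr (by linarith [hmain])
      calc Real.cosh (dist x y / 2) ≤ (2 * Real.exp J) / Real.exp β := hdiv
        _ = K := by rw [hK_def, Real.exp_sub]; ring
    have hsq := sq_half_le_cosh (dist x y / 2)
    have h4 : (dist x y / 2) ^ 2 ≤ 2 * K := by nlinarith
    have h5 : dist x y / 2 ≤ Real.sqrt (2 * K) := by
      rw [← Real.sqrt_sq (by positivity : (0:ℝ) ≤ dist x y / 2)]
      exact Real.sqrt_le_sqrt h4
    linarith

lemma midCN_of_CAT {X : Type*} [MetricSpace X] (hX : IsCATMinusOne X) : MidCN X :=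
  fun x y => exists_midpoint_CN hX x y

end Stmt18Aux

/-- Proposition 3.4: for a countable group `G` acting discretely by isometries on a
complete separable CAT(-1) space `X`, the horofunction compactification splits into a
Borel `G`-invariant partition into horofunctions bounded from below and unbounded from
below, and on the bounded part the map sending `h` to the circumcenter of
`{d ∈ G·x₀ : h(d) ≤ inf_{G·x₀} h + 1}` is Borel and `G`-equivariant.  Here the
`G`-action on horofunctions is `(g·h)(x) = h(g⁻¹x) − h(g⁻¹x₀)`. -/
theorem stmt18 {X : Type*} [MetricSpace X] [CompleteSpace X] [Nonempty X]
    [TopologicalSpace.SeparableSpace X]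
    (hX : IsCATMinusOne X)
    {G : Type*} [Group G] [Countable G] [MulAction G X]
    (hiso : ∀ g : G, Isometry (fun x : X => g • x))
    (hdisc : ∀ x : X, DiscreteTopology (MulAction.orbit G x))
    (x₀ : X) :
    ∃ act : G → C(X, ℝ) → C(X, ℝ),
      (∀ (g : G) (h : C(X, ℝ)) (x : X), act g h x = h (g⁻¹ • x) - h (g⁻¹ • x₀)) ∧
      -- the action preserves the horofunction compactification
      (∀ g : G, ∀ h ∈ HoroSet x₀, act g h ∈ HoroSet x₀) ∧
      -- the set of bounded-below horofunctions is Borel ...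
      (@MeasurableSet C(X, ℝ) (borel C(X, ℝ))
        {h : C(X, ℝ) | h ∈ HoroSet x₀ ∧ BddBelow (Set.range (h : X → ℝ))}) ∧
      -- ... and G-invariant, so the partition into bounded and unbounded parts is
      -- Borel and G-invariant
      (∀ g : G, ∀ h ∈ HoroSet x₀,
        (BddBelow (Set.range (h : X → ℝ)) ↔ BddBelow (Set.range (act g h : X → ℝ)))) ∧
      -- the circumcenter map on the bounded part is Borel ...
      (@Measurable {h : C(X, ℝ) // h ∈ HoroSet x₀ ∧ BddBelow (Set.range (h : X → ℝ))} X
        (MeasurableSpace.comap Subtype.val (borel C(X, ℝ))) (borel X)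
        (fun h => circumcenter {x : X | x ∈ MulAction.orbit G x₀ ∧
          (h : C(X, ℝ)) x ≤ sInf ((h : C(X, ℝ)) '' MulAction.orbit G x₀) + 1})) ∧
      -- ... and G-equivariant
      (∀ g : G, ∀ h ∈ HoroSet x₀, BddBelow (Set.range (h : X → ℝ)) →
        circumcenter {x : X | x ∈ MulAction.orbit G x₀ ∧
            (act g h) x ≤ sInf ((act g h : X → ℝ) '' MulAction.orbit G x₀) + 1} =
          g • circumcenter {x : X | x ∈ MulAction.orbit G x₀ ∧
            h x ≤ sInf ((h : X → ℝ) '' MulAction.orbit G x₀) + 1}) := by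
  classical
  have hmid : Stmt18Aux.MidCN X := Stmt18Aux.midCN_of_CAT hX
  open Stmt18Aux in
  set D : Set X := MulAction.orbit G x₀ with hD_def
  have hx₀D : x₀ ∈ D := MulAction.mem_orbit_self x₀
  have hDne : D.Nonempty := ⟨x₀, hx₀D⟩
  have hDinv : ∀ (g : G) (x : X), x ∈ D → g • x ∈ D := by
    rintro g x ⟨k, rfl⟩
    exact ⟨g * k, mul_smul g k x₀⟩
  set σfun : G → C(X, X) := fun g => ⟨fun x => g⁻¹ • x, (hiso g⁻¹).continuous⟩ with hσ_def
  set act : G → C(X, ℝ) → C(X, ℝ) :=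
    fun g h => h.comp (σfun g) - ContinuousMap.const X (h (g⁻¹ • x₀)) with hact_def
  have hact_apply : ∀ (g : G) (h : C(X, ℝ)) (x : X),
      act g h x = h (g⁻¹ • x) - h (g⁻¹ • x₀) := by
    intro g h x
    simp [hact_def, hσ_def]
  have hact_cont : ∀ g : G, Continuous (act g) := by
    intro g
    rw [hact_def]
    exact (ContinuousMap.continuous_precomp (σfun g)).sub
      (ContinuousMap.continuous_const'.comp (continuous_eval_const (g⁻¹ • x₀)))
  have hdist_smul : ∀ (g : G) (a b : X), dist (g • a) (g • b) = dist a b := by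
    intro g a b
    exact (hiso g).dist_eq a b
  have hact_iota : ∀ (g : G) (x : X), act g (iotaMap x₀ x) = iotaMap x₀ (g • x) := by
    intro g x
    ext z
    rw [hact_apply]
    have h1 : dist (g⁻¹ • z) x = dist z (g • x) := by
      have := hdist_smul g (g⁻¹ • z) x
      rw [smul_inv_smul] at this
      exact this.symm
    have h2 : dist (g⁻¹ • x₀) x = dist x₀ (g • x) := by
      have := hdist_smul g (g⁻¹ • x₀) x
      rw [smul_inv_smul] at this
      exact this.symm
    simp only [iotaMap, ContinuousMap.coe_mk]
    rw [h1, h2]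
    ring
  have hact_horo : ∀ g : G, ∀ h ∈ HoroSet x₀, act g h ∈ HoroSet x₀ := by
    intro g h hh
    have h1 : act g h ∈ act g '' closure (Set.range (iotaMap x₀)) := ⟨h, hh, rfl⟩
    have h2 := image_closure_subset_closure_image (hact_cont g) h1
    refine closure_mono ?_ h2
    rintro _ ⟨_, ⟨x, rfl⟩, rfl⟩
    exact ⟨g • x, (hact_iota g x).symm⟩
  have hbdd_iff : ∀ (g : G) (h : C(X, ℝ)),
      BddBelow (Set.range (h : X → ℝ)) ↔ BddBelow (Set.range (act g h : X → ℝ)) := by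
    intro g h
    constructor
    · rintro ⟨β, hβ⟩
      refine ⟨β - h (g⁻¹ • x₀), ?_⟩
      rintro _ ⟨x, rfl⟩
      rw [hact_apply]
      have := hβ (Set.mem_range_self (g⁻¹ • x))
      simpa using by linarith
    · rintro ⟨β, hβ⟩
      refine ⟨β + h (g⁻¹ • x₀), ?_⟩
      rintro _ ⟨x, rfl⟩
      have h1 := hβ (Set.mem_range_self (g • x))
      rw [hact_apply] at h1
      rw [inv_smul_smul] at h1
      linarith
  refine ⟨act, hact_apply, hact_horo, ?_, fun g h _ => hbdd_iff g h, ?_, ?_⟩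
  · -- Borel-ness of the bounded-below part
    letI : MeasurableSpace C(X, ℝ) := borel C(X, ℝ)
    haveI : BorelSpace C(X, ℝ) := ⟨rfl⟩
    set u : ℕ → X := TopologicalSpace.denseSeq X with hu_def
    have hdense : DenseRange u := TopologicalSpace.denseRange_denseSeq X
    have hset : {h : C(X, ℝ) | h ∈ HoroSet x₀ ∧ BddBelow (Set.range (h : X → ℝ))} =
        HoroSet x₀ ∩ ⋃ n : ℕ, ⋂ k : ℕ, {h : C(X, ℝ) | -(n : ℝ) ≤ h (u k)} := by
      ext h
      simp only [Set.mem_setOf_eq, Set.mem_inter_iff, Set.mem_iUnion, Set.mem_iInter]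
      constructor
      · rintro ⟨hh, β, hβ⟩
        obtain ⟨n, hn⟩ := exists_nat_ge (-β)
        refine ⟨hh, n, fun k => ?_⟩
        have := hβ (Set.mem_range_self (u k))
        linarith
      · rintro ⟨hh, n, hn⟩
        refine ⟨hh, -(n : ℝ), ?_⟩
        rintro _ ⟨x, rfl⟩
        have hclosed : IsClosed {x : X | -(n : ℝ) ≤ h x} :=
          isClosed_le continuous_const h.continuous
        have hsub : Set.range u ⊆ {x : X | -(n : ℝ) ≤ h x} := by
          rintro _ ⟨k, rfl⟩
          exact hn k
        exact closure_minimal hsub hclosed (hdense x)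
    rw [hset]
    exact (isClosed_closure.measurableSet).inter
      (MeasurableSet.iUnion fun n => MeasurableSet.iInter fun k =>
        (isClosed_le continuous_const (continuous_eval_const (u k))).measurableSet)
  · -- measurability of the circumcenter map
    letI : MeasurableSpace C(X, ℝ) := borel C(X, ℝ)
    haveI : BorelSpace C(X, ℝ) := ⟨rfl⟩
    letI : MeasurableSpace X := borel X
    haveI : BorelSpace X := ⟨rfl⟩
    set Ω := {h : C(X, ℝ) // h ∈ HoroSet x₀ ∧ BddBelow (Set.range (h : X → ℝ))} with hΩ_def
    letI : MeasurableSpace Ω := MeasurableSpace.comap Subtype.val (borel C(X, ℝ))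
    have hval : Measurable (Subtype.val : Ω → C(X, ℝ)) := measurable_iff_comap_le.mpr le_rfl
    have hev : ∀ x : X, Measurable fun h : Ω => (h : C(X, ℝ)) x := fun x =>
      ((continuous_eval_const x).measurable).comp hval
    -- enumeration of the orbit
    obtain ⟨e, he⟩ := exists_surjective_nat G
    set d : ℕ → X := fun n => e n • x₀ with hd_def
    have hdD : ∀ n, d n ∈ D := fun n => ⟨e n, rfl⟩
    have hDd : ∀ x ∈ D, ∃ n, d n = x := by
      rintro x ⟨k, rfl⟩
      obtain ⟨n, rfl⟩ := he k
      exact ⟨n, rfl⟩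
    -- basic facts about sublevel sets
    set Bs : Ω → Set X := fun h =>
      {x : X | x ∈ D ∧ (h : C(X, ℝ)) x ≤ sInf ((h : C(X, ℝ)) '' D) + 1} with hBs_def
    have hBne : ∀ h : Ω, (Bs h).Nonempty := fun h =>
      (Stmt18Aux.sublevel_nonempty_bounded hmid x₀ hDne h.2.1 h.2.2).1
    have hBbd : ∀ h : Ω, IsBounded (Bs h) := fun h =>
      (Stmt18Aux.sublevel_nonempty_bounded hmid x₀ hDne h.2.1 h.2.2).2
    have hImne : ∀ h : Ω, (((h : C(X, ℝ)) : X → ℝ) '' D).Nonempty := fun h => hDne.image _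
    have hImbdd : ∀ h : Ω, BddBelow (((h : C(X, ℝ)) : X → ℝ) '' D) := fun h =>
      BddBelow.mono (Set.image_subset_range _ _) h.2.2
    -- the infimum over the orbit
    set I : Ω → ℝ := fun h => sInf (((h : C(X, ℝ)) : X → ℝ) '' D) with hI_def
    have hI_meas : Measurable I := by
      apply measurable_of_Iio
      intro a
      have hseteq : I ⁻¹' Set.Iio a = ⋃ n : ℕ, {h : Ω | (h : C(X, ℝ)) (d n) < a} := by
        ext h
        simp only [Set.mem_preimage, Set.mem_Iio, Set.mem_iUnion, Set.mem_setOf_eq]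
        rw [hI_def]
        constructor
        · intro hlt
          obtain ⟨_, ⟨x, hxD, rfl⟩, hx⟩ := exists_lt_of_csInf_lt (hImne h) hlt
          obtain ⟨n, rfl⟩ := hDd x hxD
          exact ⟨n, hx⟩
        · rintro ⟨n, hn⟩
          exact (csInf_lt_iff (hImbdd h) (hImne h)).mpr ⟨_, ⟨d n, hdD n, rfl⟩, hn⟩
      rw [hseteq]
      exact MeasurableSet.iUnion fun n => measurableSet_lt (hev (d n)) measurable_const
    -- covering radii from a dense sequence
    set q : ℕ → X := TopologicalSpace.denseSeq X with hq_def
    have hqdense : DenseRange q := TopologicalSpace.denseRange_denseSeq X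
    set S : ℕ → Ω → ℝ := fun k h => Stmt18Aux.rad (Bs h) (q k) with hS_def
    have hS_nonneg : ∀ k h, 0 ≤ S k h := fun k h =>
      Stmt18Aux.rad_nonneg (hBne h) (hBbd h) (q k)
    have hS_meas : ∀ k, Measurable (S k) := by
      intro k
      apply measurable_of_Iic
      intro a
      have hseteq : S k ⁻¹' Set.Iic a =
          ⋂ n : ℕ, {h : Ω | (h : C(X, ℝ)) (d n) ≤ I h + 1 → dist (q k) (d n) ≤ a} := by
        ext h
        simp only [Set.mem_preimage, Set.mem_Iic, Set.mem_iInter, Set.mem_setOf_eq]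
        have hrw : S k h ≤ a ↔ ∀ b ∈ Bs h, dist (q k) b ≤ a := by
          rw [hS_def]
          constructor
          · intro hle b hb
            exact le_trans (Stmt18Aux.dist_le_rad (hBbd h) hb) hle
          · intro hall
            apply csSup_le ((hBne h).image _)
            rintro _ ⟨b, hb, rfl⟩
            exact hall b hb
        rw [hrw]
        constructor
        · intro hall n hn
          exact hall (d n) ⟨hdD n, hn⟩
        · rintro hall b ⟨hbD, hble⟩
          obtain ⟨n, rfl⟩ := hDd b hbD
          exact hall n hble
      rw [hseteq]
      refine MeasurableSet.iInter fun n => ?_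
      by_cases hc : dist (q k) (d n) ≤ a
      · have : {h : Ω | (h : C(X, ℝ)) (d n) ≤ I h + 1 → dist (q k) (d n) ≤ a} = Set.univ :=
          Set.eq_univ_of_forall fun h => fun _ => hc
        rw [this]
        exact MeasurableSet.univ
      · have : {h : Ω | (h : C(X, ℝ)) (d n) ≤ I h + 1 → dist (q k) (d n) ≤ a} =
            {h : Ω | (h : C(X, ℝ)) (d n) ≤ I h + 1}ᶜ := by
          ext h
          simp [hc]
        rw [this]
        exact (measurableSet_le (hev (d n)) (hI_meas.add_const 1)).compl
    -- the circumradius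
    set ρ : Ω → ℝ := fun h => sInf (Set.range fun k => S k h) with hρ_def
    have hρ_bdd : ∀ h : Ω, BddBelow (Set.range fun k => S k h) := fun h =>
      ⟨0, by rintro _ ⟨k, rfl⟩; exact hS_nonneg k h⟩
    have hρ_eq : ∀ h : Ω, ρ h = circumradius (Bs h) := fun h =>
      Stmt18Aux.circumradius_eq_sInf_dense (hBne h) (hBbd h) hqdense
    have hρ_meas : Measurable ρ := by
      apply measurable_of_Iio
      intro a
      have hseteq : ρ ⁻¹' Set.Iio a = ⋃ k : ℕ, {h : Ω | S k h < a} := by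
        ext h
        simp only [Set.mem_preimage, Set.mem_Iio, Set.mem_iUnion, Set.mem_setOf_eq]
        rw [hρ_def]
        constructor
        · intro hlt
          obtain ⟨_, ⟨k, rfl⟩, hk⟩ := exists_lt_of_csInf_lt (Set.range_nonempty _) hlt
          exact ⟨k, hk⟩
        · rintro ⟨k, hk⟩
          exact (csInf_lt_iff (hρ_bdd h) (Set.range_nonempty _)).mpr ⟨_, ⟨k, rfl⟩, hk⟩
      rw [hseteq]
      exact MeasurableSet.iUnion fun k => measurableSet_lt (hS_meas k) measurable_const
    -- measurable selection of approximate circumcenters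
    have hPex : ∀ (n : ℕ) (h : Ω), ∃ k : ℕ, S k h < ρ h + 1 / (n + 1) := by
      intro n h
      have hlt : sInf (Set.range fun k => S k h) < ρ h + 1 / (n + 1) := by
        rw [hρ_def]
        have : (0:ℝ) < 1 / ((n:ℝ) + 1) := by positivity
        linarith
      obtain ⟨_, ⟨k, rfl⟩, hk⟩ := exists_lt_of_csInf_lt (Set.range_nonempty _) hlt
      exact ⟨k, hk⟩
    set kSel : ℕ → Ω → ℕ := fun n h => Nat.find (hPex n h) with hkSel_def
    have hkSel_meas : ∀ n, Measurable (kSel n) := by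
      intro n
      apply measurable_to_countable'
      intro j
      have hseteq : kSel n ⁻¹' {j} =
          {h : Ω | S j h < ρ h + 1 / (n + 1)} ∩
            ⋂ i : ℕ, ⋂ _ : i < j, {h : Ω | ¬ S i h < ρ h + 1 / (n + 1)} := by
        ext h
        simp only [Set.mem_preimage, Set.mem_singleton_iff, Set.mem_inter_iff,
          Set.mem_iInter, Set.mem_setOf_eq, hkSel_def, Nat.find_eq_iff (hPex n h)]
      rw [hseteq]
      exact (measurableSet_lt (hS_meas j) (hρ_meas.add_const _)).inter
        (MeasurableSet.iInter fun i => MeasurableSet.iInter fun _ =>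
          (measurableSet_lt (hS_meas i) (hρ_meas.add_const _)).compl)
    set F : ℕ → Ω → X := fun n h => q (kSel n h) with hF_def
    have hF_meas : ∀ n, Measurable (F n) := fun n =>
      measurable_from_top.comp (hkSel_meas n)
    have htend : ∀ h : Ω, Filter.Tendsto (fun n => F n h) Filter.atTop
        (nhds (circumcenter (Bs h))) := by
      intro h
      set R : ℝ := circumradius (Bs h) with hR_def
      have hR0 : 0 ≤ R := Stmt18Aux.circumradius_nonneg (hBne h) (hBbd h)
      have hrad_le : ∀ n : ℕ, Stmt18Aux.rad (Bs h) (F n h) ≤ R + 1 / (n + 1) := by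
        intro n
        rw [hR_def, ← hρ_eq h]
        exact (Nat.find_spec (hPex n h)).le
      set gbnd : ℕ → ℝ := fun n =>
        2 * Real.sqrt (2 * ((Real.cosh (R + 1 / (n + 1)) + Real.cosh R) /
          (2 * Real.cosh R) - 1)) with hgbnd_def
      have hdist_le : ∀ n : ℕ, dist (F n h) (circumcenter (Bs h)) ≤ gbnd n := by
        intro n
        exact Stmt18Aux.dist_circumcenter_le hmid (hBne h) (hBbd h)
          (by positivity) (hrad_le n)
      have hgbnd_tendsto : Filter.Tendsto gbnd Filter.atTop (nhds 0) := by
        have h1 : Filter.Tendsto (fun n : ℕ => R + 1 / ((n:ℝ) + 1)) Filter.atTop (nhds R) := by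
          have := tendsto_one_div_add_atTop_nhds_zero_nat (𝕜 := ℝ)
          simpa using Filter.Tendsto.const_add R this
        have h3 : Filter.Tendsto (fun n : ℕ => Real.cosh (R + 1 / ((n:ℝ) + 1))) Filter.atTop
            (nhds (Real.cosh R)) := (Real.continuous_cosh.tendsto R).comp h1
        have h4 : Filter.Tendsto gbnd Filter.atTop
            (nhds (2 * Real.sqrt (2 * ((Real.cosh R + Real.cosh R) / (2 * Real.cosh R) - 1)))) := by
          apply Filter.Tendsto.const_mul
          apply (Real.continuous_sqrt.tendsto _).comp
          apply Filter.Tendsto.const_mul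
          apply Filter.Tendsto.sub_const
          exact (h3.add tendsto_const_nhds).div tendsto_const_nhds
            (by positivity : (2 : ℝ) * Real.cosh R ≠ 0)
        have h5 : 2 * Real.sqrt (2 * ((Real.cosh R + Real.cosh R) / (2 * Real.cosh R) - 1)) = 0 := by
          have hcRpos : (0:ℝ) < Real.cosh R := Real.cosh_pos _
          have : (Real.cosh R + Real.cosh R) / (2 * Real.cosh R) = 1 := by
            field_simp
            ring
          rw [this]
          simp
        rwa [h5] at h4
      have hzero : Filter.Tendsto (fun n => dist (F n h) (circumcenter (Bs h)))
          Filter.atTop (nhds 0) :=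
        squeeze_zero (fun n => dist_nonneg) hdist_le hgbnd_tendsto
      exact tendsto_iff_dist_tendsto_zero.mpr hzero
    exact measurable_of_tendsto_metrizable' Filter.atTop hF_meas
      (tendsto_pi_nhds.mpr htend)
  · -- equivariance of the circumcenter map
    intro g h hh hbdd
    have hsub := Stmt18Aux.sublevel_nonempty_bounded hmid x₀ hDne hh hbdd
    have hBne := hsub.1
    have hBbd := hsub.2
    have hsurj : Function.Surjective (fun x : X => g • x) := fun y => ⟨g⁻¹ • y, smul_inv_smul g y⟩
    set c₀ : ℝ := h (g⁻¹ • x₀) with hc₀_def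
    have hImne : ((h : X → ℝ) '' D).Nonempty := hDne.image _
    have hImbdd : BddBelow ((h : X → ℝ) '' D) :=
      BddBelow.mono (Set.image_subset_range _ _) hbdd
    have hIm : ((act g h : X → ℝ)) '' D = (fun t => t - c₀) '' ((h : X → ℝ) '' D) := by
      ext t
      constructor
      · rintro ⟨x, hxD, rfl⟩
        refine ⟨h (g⁻¹ • x), ⟨g⁻¹ • x, hDinv g⁻¹ x hxD, rfl⟩, ?_⟩
        rw [hact_apply]
      · rintro ⟨_, ⟨y, hyD, rfl⟩, rfl⟩
        refine ⟨g • y, hDinv g y hyD, ?_⟩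
        rw [hact_apply, inv_smul_smul]
    have hsInf : sInf ((act g h : X → ℝ) '' D) = sInf ((h : X → ℝ) '' D) - c₀ := by
      rw [hIm]
      have hmono : Monotone (fun t : ℝ => t - c₀) := fun a b hab => by simpa using hab
      have hcont : ContinuousAt (fun t : ℝ => t - c₀) (sInf ((h : X → ℝ) '' D)) :=
        (continuous_id.sub continuous_const).continuousAt
      exact (Monotone.map_csInf_of_continuousAt hcont hmono hImne hImbdd).symm
    have himg : {x | x ∈ D ∧ (act g h) x ≤ sInf ((act g h : X → ℝ) '' D) + 1} =
        (fun y : X => g • y) '' {x | x ∈ D ∧ h x ≤ sInf ((h : X → ℝ) '' D) + 1} := by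
      ext x
      simp only [Set.mem_setOf_eq, Set.mem_image]
      constructor
      · rintro ⟨hxD, hxle⟩
        refine ⟨g⁻¹ • x, ⟨hDinv g⁻¹ x hxD, ?_⟩, smul_inv_smul g x⟩
        rw [hact_apply, hsInf] at hxle
        linarith
      · rintro ⟨y, ⟨hyD, hyle⟩, rfl⟩
        refine ⟨hDinv g y hyD, ?_⟩
        rw [hact_apply, hsInf, inv_smul_smul]
        linarith
    rw [himg]
    exact Stmt18Aux.circumcenter_image hmid hBne hBbd (hiso g) hsurj
end
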